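/- arXiv:0902.3073 — 9 statements merged into one kernel-verified Lean document; each statement's English description precedes it below -/
import Mathlib

section
/- The function x ↦ Γ(x+α)/Γ(x+β) is strictly increasing on (0,∞) whenever α > β ≥ 0. -/
open Real Set

lemma strictConvexOn_log_Gamma' : StrictConvexOn ℝ (Ioi (0:ℝ)) (Real.log ∘ Real.Gamma) := by
  refine ⟨convex_Ioi 0, fun x hx y hy hxy a b ha hb hab => ?_⟩
  simp only [smul_eq_mul, Function.comp_apply]
  have hx0 : (0:ℝ) < x := hx
  have hy0 : (0:ℝ) < y := hy
  have hz0 : (0:ℝ) < a * x + b * y := by positivity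
  have key : ∀ t : ℝ, 0 < t → Real.log (Real.Gamma (t + 1)) = Real.log t + Real.log (Real.Gamma t) := by
    intro t ht
    rw [Real.Gamma_add_one ht.ne', Real.log_mul ht.ne' (Real.Gamma_pos_of_pos ht).ne']
  -- convexity applied at shifted points
  have hconv := Real.convexOn_log_Gamma.2 (mem_Ioi.2 (by linarith : (0:ℝ) < x + 1))
    (mem_Ioi.2 (by linarith : (0:ℝ) < y + 1)) ha.le hb.le hab
  simp only [smul_eq_mul, Function.comp_apply] at hconv
  have hshift : a * (x + 1) + b * (y + 1) = (a * x + b * y) + 1 := by linear_combination hab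
  rw [hshift, key _ hz0, key _ hx0, key _ hy0] at hconv
  have hlog := strictConcaveOn_log_Ioi.2 hx hy hxy ha hb hab
  simp only [smul_eq_mul] at hlog
  nlinarith [hconv, hlog]

theorem stmt_2 (α β : ℝ) (hβ : 0 ≤ β) (hαβ : β < α) :
    StrictMonoOn (fun x : ℝ => Real.Gamma (x + α) / Real.Gamma (x + β)) (Set.Ioi 0) := by
  intro x hx y hy hxy
  have hx0 : (0:ℝ) < x := hx
  have hy0 : (0:ℝ) < y := hy
  have ha0 : (0:ℝ) < x + β := by linarith
  have hb0 : (0:ℝ) < x + α := by linarith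
  have hc0 : (0:ℝ) < y + β := by linarith
  have hd0 : (0:ℝ) < y + α := by linarith
  have hs : (0:ℝ) < (y - x) + (α - β) := by linarith
  set μ : ℝ := (y - x) / ((y - x) + (α - β)) with hμ
  set ν : ℝ := (α - β) / ((y - x) + (α - β)) with hν
  have hμ0 : 0 < μ := div_pos (by linarith) hs
  have hν0 : 0 < ν := div_pos (by linarith) hs
  have hμν : μ + ν = 1 := by rw [hμ, hν]; field_simp
  have had : x + β ≠ y + α := by intro h; linarith
  have hb_comb : μ * (x + β) + ν * (y + α) = x + α := by rw [hμ, hν]; field_simp; ring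
  have hc_comb : ν * (x + β) + μ * (y + α) = y + β := by rw [hμ, hν]; field_simp; ring
  have h1 := strictConvexOn_log_Gamma'.2 (mem_Ioi.2 ha0) (mem_Ioi.2 hd0) had hμ0 hν0 hμν
  have h2 := strictConvexOn_log_Gamma'.2 (mem_Ioi.2 ha0) (mem_Ioi.2 hd0) had hν0 hμ0 (by linarith)
  simp only [smul_eq_mul, Function.comp_apply] at h1 h2
  rw [hb_comb] at h1
  rw [hc_comb] at h2
  set A := Real.log (Real.Gamma (x + β))
  set B := Real.log (Real.Gamma (x + α))
  set C := Real.log (Real.Gamma (y + β))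
  set D := Real.log (Real.Gamma (y + α))
  have h3 := add_lt_add h1 h2
  have h4 : μ * A + ν * D + (ν * A + μ * D) = (μ + ν) * (A + D) := by ring
  rw [h4, hμν, one_mul] at h3
  have hsum : B + C < D + A := by linarith
  have hΓa := Real.Gamma_pos_of_pos ha0
  have hΓb := Real.Gamma_pos_of_pos hb0
  have hΓc := Real.Gamma_pos_of_pos hc0
  have hΓd := Real.Gamma_pos_of_pos hd0
  have hprod : Real.Gamma (x + α) * Real.Gamma (y + β) <
      Real.Gamma (y + α) * Real.Gamma (x + β) := by
    have hl : Real.log (Real.Gamma (x + α) * Real.Gamma (y + β)) <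
        Real.log (Real.Gamma (y + α) * Real.Gamma (x + β)) := by
      rw [Real.log_mul hΓb.ne' hΓc.ne', Real.log_mul hΓd.ne' hΓa.ne']
      exact hsum
    exact (Real.log_lt_log_iff (by positivity) (by positivity)).1 hl
  show Real.Gamma (x + α) / Real.Gamma (x + β) < Real.Gamma (y + α) / Real.Gamma (y + β)
  rw [div_lt_div_iff₀ hΓa hΓc]
  exact hprod
end

section
/- Suppose b > a > 0, δ > 0, m ≥ 1 an integer, and 0 ≤ k ≤ m/2. Then 1/[(a+δ)_k (b)_{m−k}] + 1/[(a+δ)_{m−k} (b)_k] − 1/[(a)_{m−k} (b+δ)_k] − 1/[(a)_k (b+δ)_{m−k}] < 0 when k < m−k, and 1/[(a+δ)_k (b)_{m−k}] − 1/[(a)_k (b+δ)_{m−k}] < 0 when k = m−k. -/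
/-- Pochhammer symbol (rising factorial) for real argument. -/
def poch (a : ℝ) (n : ℕ) : ℝ := ∏ i ∈ Finset.range n, (a + i)

lemma poch_pos {a : ℝ} (ha : 0 < a) (n : ℕ) : 0 < poch a n :=
  Finset.prod_pos (fun i _ => by positivity)

lemma poch_add (a : ℝ) (k d : ℕ) : poch a (k + d) = poch a k * poch (a + k) d := by
  unfold poch
  rw [Finset.prod_range_add]
  congr 1
  apply Finset.prod_congr rfl
  intro i _
  push_cast
  ring

lemma poch_lt_poch {x y : ℝ} (hx : 0 < x) (hxy : x < y) {d : ℕ} (hd : 1 ≤ d) :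
    poch x d < poch y d := by
  apply Finset.prod_lt_prod_of_nonempty
  · intro i _; positivity
  · intro i _; linarith
  · exact ⟨0, Finset.mem_range.mpr hd⟩

lemma poch_mul_le {x y δ : ℝ} (hx : 0 < x) (hxy : x ≤ y) (hδ : 0 < δ) (n : ℕ) :
    poch x n * poch (y + δ) n ≤ poch (x + δ) n * poch y n := by
  have hy : 0 < y := lt_of_lt_of_le hx hxy
  unfold poch
  rw [← Finset.prod_mul_distrib, ← Finset.prod_mul_distrib]
  apply Finset.prod_le_prod
  · intro i _; positivity
  · intro i _; nlinarith [Nat.cast_nonneg (α := ℝ) i]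

lemma poch_mul_lt {x y δ : ℝ} (hx : 0 < x) (hxy : x < y) (hδ : 0 < δ) {n : ℕ} (hn : 1 ≤ n) :
    poch x n * poch (y + δ) n < poch (x + δ) n * poch y n := by
  have hy : 0 < y := lt_trans hx hxy
  unfold poch
  rw [← Finset.prod_mul_distrib, ← Finset.prod_mul_distrib]
  apply Finset.prod_lt_prod_of_nonempty
  · intro i _; positivity
  · intro i _; nlinarith [Nat.cast_nonneg (α := ℝ) i]
  · exact ⟨0, Finset.mem_range.mpr hn⟩

lemma simple_diff {δ x y : ℝ} (hδ : 0 < δ) (hx : 0 < x) (hxy : x < y) :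
    1/y - 1/(y+δ) < 1/x - 1/(x+δ) := by
  have hy : 0 < y := lt_trans hx hxy
  have h1 : 1/y - 1/(y+δ) = δ/(y*(y+δ)) := by field_simp; ring
  have h2 : 1/x - 1/(x+δ) = δ/(x*(x+δ)) := by field_simp; ring
  rw [h1, h2]
  apply div_lt_div_of_pos_left hδ (by positivity)
  nlinarith

lemma diff_anti {δ : ℝ} (hδ : 0 < δ) : ∀ d, 1 ≤ d → ∀ x y : ℝ, 0 < x → x < y →
    1/poch y d - 1/poch (y+δ) d < 1/poch x d - 1/poch (x+δ) d := by
  intro d hd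
  induction d, hd using Nat.le_induction with
  | base =>
    intro x y hx hxy
    have : ∀ z : ℝ, poch z 1 = z := by intro z; simp [poch]
    rw [this, this, this, this]
    exact simple_diff hδ hx hxy
  | succ d hd ih =>
    intro x y hx hxy
    have hy : 0 < y := lt_trans hx hxy
    have hps : ∀ (z : ℝ), poch z (d+1) = poch z d * (z + d) :=
      fun z => Finset.prod_range_succ _ _
    rw [hps, hps, hps, hps]
    have hPx : 0 < poch x d := poch_pos hx d
    have hPy : 0 < poch y d := poch_pos hy d
    have hPx' : 0 < poch (x+δ) d := poch_pos (by linarith) d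
    have hPy' : 0 < poch (y+δ) d := poch_pos (by linarith) d
    have hxd : (0:ℝ) < x + d := by positivity
    have hyd : (0:ℝ) < y + d := by positivity
    have key : ∀ (P P' c c' : ℝ),
        1/(P*c) - 1/(P'*c') = (1/P - 1/P') * (1/c) + (1/P') * (1/c - 1/c') := by
      intro P P' c c'
      field_simp
      ring
    rw [key (poch x d) (poch (x+δ) d) (x+d) (x+δ+d),
        key (poch y d) (poch (y+δ) d) (y+d) (y+δ+d)]
    have hdx0 : 0 ≤ 1/poch x d - 1/poch (x+δ) d := by
      have := poch_lt_poch (x := x) (y := x+δ) hx (by linarith) hd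
      have := one_div_le_one_div_of_le hPx this.le
      linarith
    have t1 : (1/poch y d - 1/poch (y+δ) d) * (1/(y+d)) <
        (1/poch x d - 1/poch (x+δ) d) * (1/(x+d)) := by
      apply mul_lt_mul (ih x y hx hxy)
      · exact one_div_le_one_div_of_le hxd (by linarith)
      · positivity
      · exact hdx0
    have t2 : (1/poch (y+δ) d) * (1/(y+d) - 1/(y+δ+d)) <
        (1/poch (x+δ) d) * (1/(x+d) - 1/(x+δ+d)) := by
      have hlt : 1/poch (y+δ) d < 1/poch (x+δ) d :=
        one_div_lt_one_div_of_lt hPx' (poch_lt_poch (by linarith) (by linarith) hd)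
      have hle : 1/(y+d) - 1/(y+δ+d) ≤ 1/(x+d) - 1/(x+δ+d) := by
        have := simple_diff (x := x + d) (y := y + d) hδ hxd (by linarith)
        have e1 : y + d + δ = y + δ + d := by ring
        have e2 : x + d + δ = x + δ + d := by ring
        rw [e1, e2] at this
        linarith
      have hpos2 : 0 < 1/(y+d) - 1/(y+δ+d) := by
        have : 1/(y+δ+d) < 1/(y+d) := by
          apply one_div_lt_one_div_of_lt hyd; linarith
        linarith
      apply mul_lt_mul hlt hle hpos2 (by positivity)
    linarith

theorem stmt_7 (a b δ : ℝ) (ha : 0 < a) (hab : a < b) (hδ : 0 < δ)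
    (m k : ℕ) (hm : 1 ≤ m) (hk : 2 * k ≤ m) :
    (2 * k < m →
      1 / (poch (a + δ) k * poch b (m - k)) + 1 / (poch (a + δ) (m - k) * poch b k) -
        1 / (poch a (m - k) * poch (b + δ) k) - 1 / (poch a k * poch (b + δ) (m - k)) < 0) ∧
    (2 * k = m →
      1 / (poch (a + δ) k * poch b (m - k)) - 1 / (poch a k * poch (b + δ) (m - k)) < 0) := by
  constructor
  · intro hlt
    set d := m - 2*k with hd
    have hd1 : 1 ≤ d := by omega
    have hmk : m - k = k + d := by omega
    rw [hmk, poch_add, poch_add, poch_add, poch_add,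
        show a + δ + (k:ℝ) = a + (k:ℝ) + δ by ring,
        show b + δ + (k:ℝ) = b + (k:ℝ) + δ by ring]
    set pk := poch a k
    set Pk := poch (a+δ) k
    set qk := poch b k
    set Qk := poch (b+δ) k
    set R := poch (a+(k:ℝ)) d
    set R' := poch (a+(k:ℝ)+δ) d
    set T := poch (b+(k:ℝ)) d
    set T' := poch (b+(k:ℝ)+δ) d
    have hpk : 0 < pk := poch_pos ha k
    have hPk : 0 < Pk := poch_pos (by linarith) k
    have hqk : 0 < qk := poch_pos (by linarith) k
    have hQk : 0 < Qk := poch_pos (by linarith) k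
    have hR : 0 < R := poch_pos (by positivity) d
    have hR' : 0 < R' := poch_pos (by positivity) d
    have hb : (0:ℝ) < b := lt_trans ha hab
    have hT : 0 < T := poch_pos (by positivity) d
    have hT' : 0 < T' := poch_pos (by positivity) d
    have hE : pk * Qk ≤ Pk * qk := poch_mul_le ha hab.le hδ k
    have hB : 1/T - 1/T' < 1/R - 1/R' :=
      diff_anti hδ d hd1 (a + k) (b + k) (by positivity) (by linarith)
    have h2 : 1/T + 1/R' < 1/T' + 1/R := by linarith
    have hid : 1 / (Pk * (qk * T)) + 1 / (Pk * R' * qk) - 1 / (pk * R * Qk) -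
        1 / (pk * (Qk * T')) =
        (1/(Pk*qk)) * (1/T + 1/R') - (1/(pk*Qk)) * (1/T' + 1/R) := by
      field_simp
      ring
    rw [hid]
    have step1 : (1/(Pk*qk)) * (1/T + 1/R') ≤ (1/(pk*Qk)) * (1/T + 1/R') := by
      apply mul_le_mul_of_nonneg_right _ (by positivity)
      exact one_div_le_one_div_of_le (by positivity) hE
    have step2 : (1/(pk*Qk)) * (1/T + 1/R') < (1/(pk*Qk)) * (1/T' + 1/R) := by
      apply mul_lt_mul_of_pos_left h2 (by positivity)
    linarith
  · intro heq
    have hk1 : 1 ≤ k := by omega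
    have hmk : m - k = k := by omega
    rw [hmk]
    have hE : poch a k * poch (b+δ) k < poch (a+δ) k * poch b k :=
      poch_mul_lt ha hab hδ hk1
    have h1 : 0 < poch a k * poch (b+δ) k := by
      have := poch_pos ha k
      have := poch_pos (show (0:ℝ) < b + δ by linarith) k
      positivity
    have := one_div_lt_one_div_of_lt h1 hE
    linarith
end

section
/- Let A(x) = Σ_{k=0}^n a_k x^k and B(x) = Σ_{k=0}^n b_k x^k be polynomials with all a_k, b_k > 0. If a_n/b_n ≥ a_{n−1}/b_{n−1} ≥ ⋯ ≥ a_0/b_0, then every coefficient of the polynomial A'(x)B(x) − B'(x)A(x) is nonnegative. If moreover A and B are not proportional... (at least one inequality strict with the chain condition), then A'(x)B(x) − B'(x)A(x) > 0 for all x > 0. -/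
open Polynomial

theorem stmt_8 (n : ℕ) (a b : ℕ → ℝ)
    (ha : ∀ k ≤ n, 0 < a k) (hb : ∀ k ≤ n, 0 < b k)
    (hchain : ∀ k, 1 ≤ k → k ≤ n → a (k - 1) * b k ≤ a k * b (k - 1))
    (A B : Polynomial ℝ)
    (hA : A = ∑ k ∈ Finset.range (n + 1), Polynomial.C (a k) * Polynomial.X ^ k)
    (hB : B = ∑ k ∈ Finset.range (n + 1), Polynomial.C (b k) * Polynomial.X ^ k) :
    (∀ m, 0 ≤ (Polynomial.derivative A * B - Polynomial.derivative B * A).coeff m) ∧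
    ((∃ k, 1 ≤ k ∧ k ≤ n ∧ a (k - 1) * b k < a k * b (k - 1)) →
      ∀ x : ℝ, 0 < x →
        0 < (Polynomial.derivative A * B - Polynomial.derivative B * A).eval x) := by
  open Finset in
  -- monotonicity of the ratio chain
  have mono : ∀ j i, j ≤ i → i ≤ n → a j * b i ≤ a i * b j := by
    intro j i hji
    induction i, hji using Nat.le_induction with
    | base => intro _; exact le_refl _
    | succ i hji ih =>
      intro hin
      have hin' : i ≤ n := by omega
      have h1 := ih hin'
      have hc := hchain (i+1) (by omega) hin
      simp only [Nat.add_sub_cancel] at hc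
      have hjn : j ≤ n := by omega
      nlinarith [ha j hjn, hb j hjn, ha i hin', hb i hin', ha (i+1) hin, hb (i+1) hin]
  have hsign : ∀ i j : ℕ, i ≤ n → j ≤ n → 0 ≤ ((i:ℝ) - j) * (a i * b j - a j * b i) := by
    intro i j hi hj
    rcases le_total i j with h | h
    · have hm := mono i j h hj
      have hc : (i:ℝ) ≤ j := Nat.cast_le.mpr h
      nlinarith
    · have hm := mono j i h hi
      have hc : (j:ℝ) ≤ i := Nat.cast_le.mpr h
      nlinarith
  have hpair : ∀ i j : ℕ, 0 ≤ ((i:ℝ) - j) *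
      ((if i ≤ n then a i else 0) * (if j ≤ n then b j else 0)
        - (if j ≤ n then a j else 0) * (if i ≤ n then b i else 0)) := by
    intro i j
    by_cases hi : i ≤ n <;> by_cases hj : j ≤ n <;> simp [hi, hj, hsign]
  have hAc : ∀ m, A.coeff m = if m ≤ n then a m else 0 := by
    intro m
    rw [hA]
    simp [Polynomial.finset_sum_coeff, Polynomial.coeff_C_mul, Polynomial.coeff_X_pow,
      Finset.sum_ite_eq', Nat.lt_succ_iff]
  have hBc : ∀ m, B.coeff m = if m ≤ n then b m else 0 := by
    intro m
    rw [hB]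
    simp [Polynomial.finset_sum_coeff, Polynomial.coeff_C_mul, Polynomial.coeff_X_pow,
      Finset.sum_ite_eq', Nat.lt_succ_iff]
  constructor
  · -- Part 1: nonnegative coefficients
    intro m
    set a' : ℕ → ℝ := fun i => if i ≤ n then a i else 0 with ha'
    set b' : ℕ → ℝ := fun i => if i ≤ n then b i else 0 with hb'
    set f : ℕ → ℝ := fun p => (p:ℝ) * (a' p * b' (m+1-p) - b' p * a' (m+1-p)) with hf
    have hc : (derivative A * B - derivative B * A).coeff m
        = ∑ i ∈ range (m+2), f i := by
      rw [Polynomial.coeff_sub, Polynomial.coeff_mul, Polynomial.coeff_mul,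
        Finset.Nat.sum_antidiagonal_eq_sum_range_succ_mk,
        Finset.Nat.sum_antidiagonal_eq_sum_range_succ_mk,
        Finset.sum_range_succ' f (m+1)]
      simp only [Polynomial.coeff_derivative, hAc, hBc, hf]
      rw [← Finset.sum_sub_distrib]
      simp only [Nat.cast_zero, zero_mul, add_zero]
      apply Finset.sum_congr rfl
      intro k hk
      have : m + 1 - (k+1) = m - k := by omega
      rw [this]
      push_cast
      ring
    rw [hc]
    have hrefl : ∑ i ∈ range (m+2), f i = ∑ i ∈ range (m+2), f (m+1-i) := by
      rw [← Finset.sum_range_reflect]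
      exact Finset.sum_congr rfl fun j _ => by norm_num
    have h2 : (∑ i ∈ range (m+2), f i) + (∑ i ∈ range (m+2), f i)
        = ∑ i ∈ range (m+2), (f i + f (m+1-i)) := by
      rw [Finset.sum_add_distrib, ← hrefl]
    have hterm : ∀ i ∈ range (m+2), 0 ≤ f i + f (m+1-i) := by
      intro i hi
      have hi' : i ≤ m+1 := by simpa [Nat.lt_succ_iff] using hi
      have hji : m + 1 - (m+1-i) = i := by omega
      have hcast : ((m+1-i : ℕ) : ℝ) = (m:ℝ) + 1 - i := by
        push_cast [Nat.cast_sub (by omega : i ≤ m+1)]; ring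
      have h := hpair i (m+1-i)
      rw [hcast] at h
      simp only [hf, hji, hcast]
      simp only [ha', hb'] at h ⊢
      exact h.trans_eq (by ring)
    have hnn : 0 ≤ (∑ i ∈ range (m+2), f i) + (∑ i ∈ range (m+2), f i) := by
      rw [h2]; exact Finset.sum_nonneg hterm
    linarith
  · -- Part 2: strict positivity of the evaluation
    rintro ⟨k, hk1, hkn, hstrict⟩ x hx
    have hAe : A.eval x = ∑ i ∈ range (n+1), a i * x ^ i := by
      rw [hA]; simp [Polynomial.eval_finset_sum]
    have hBe : B.eval x = ∑ i ∈ range (n+1), b i * x ^ i := by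
      rw [hB]; simp [Polynomial.eval_finset_sum]
    have hdAe : (derivative A).eval x = ∑ i ∈ range (n+1), a i * ((i:ℕ) * x ^ (i-1)) := by
      rw [hA]
      simp [Polynomial.derivative_sum, Polynomial.derivative_C_mul, Polynomial.derivative_X_pow,
        Polynomial.eval_finset_sum]
    have hdBe : (derivative B).eval x = ∑ i ∈ range (n+1), b i * ((i:ℕ) * x ^ (i-1)) := by
      rw [hB]
      simp [Polynomial.derivative_sum, Polynomial.derivative_C_mul, Polynomial.derivative_X_pow,
        Polynomial.eval_finset_sum]
    set g : ℕ → ℕ → ℝ := fun i j => ((i:ℝ) - j) * (a i * b j) * x ^ (i+j) with hg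
    have hxd : ∀ (c : ℕ → ℝ), x * ∑ i ∈ range (n+1), c i * ((i:ℕ) * x ^ (i-1))
        = ∑ i ∈ range (n+1), c i * ((i:ℝ) * x ^ i) := by
      intro c
      rw [Finset.mul_sum]
      refine Finset.sum_congr rfl fun i _ => ?_
      match i with
      | 0 => simp
      | Nat.succ i => rw [Nat.succ_sub_one]; push_cast; rw [pow_succ]; ring
    have hmul : x * (derivative A * B - derivative B * A).eval x
        = ∑ i ∈ range (n+1), ∑ j ∈ range (n+1), g i j := by
      have e0 : x * (derivative A * B - derivative B * A).eval x
          = (x * (derivative A).eval x) * B.eval x - (x * (derivative B).eval x) * A.eval x := by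
        simp only [Polynomial.eval_sub, Polynomial.eval_mul]; ring
      rw [e0, hdAe, hdBe, hxd a, hxd b, hAe, hBe, Finset.sum_mul_sum, Finset.sum_mul_sum]
      nth_rewrite 2 [Finset.sum_comm]
      rw [← Finset.sum_sub_distrib]
      refine Finset.sum_congr rfl fun i _ => ?_
      rw [← Finset.sum_sub_distrib]
      refine Finset.sum_congr rfl fun j _ => ?_
      simp only [hg, pow_add]
      ring
    have hswap : ∑ i ∈ range (n+1), ∑ j ∈ range (n+1), g i j
        = ∑ i ∈ range (n+1), ∑ j ∈ range (n+1), g j i := Finset.sum_comm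
    have h2 : 2 * (x * (derivative A * B - derivative B * A).eval x)
        = ∑ i ∈ range (n+1), ∑ j ∈ range (n+1), (g i j + g j i) := by
      rw [hmul]
      rw [two_mul]
      nth_rewrite 2 [hswap]
      rw [← Finset.sum_add_distrib]
      refine Finset.sum_congr rfl fun i _ => ?_
      rw [← Finset.sum_add_distrib]
    have hterm : ∀ i ∈ range (n+1), ∀ j ∈ range (n+1), 0 ≤ g i j + g j i := by
      intro i hi j hj
      have hi' : i ≤ n := by simpa [Nat.lt_succ_iff] using hi
      have hj' : j ≤ n := by simpa [Nat.lt_succ_iff] using hj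
      have h := hsign i j hi' hj'
      have hxp : (0:ℝ) ≤ x ^ (i+j) := by positivity
      have heq : g i j + g j i = (((i:ℝ) - j) * (a i * b j - a j * b i)) * x ^ (i+j) := by
        rw [hg]
        simp only
        rw [show j + i = i + j from Nat.add_comm j i]
        ring
      rw [heq]
      exact mul_nonneg h hxp
    have hpos : 0 < ∑ i ∈ range (n+1), ∑ j ∈ range (n+1), (g i j + g j i) := by
      apply Finset.sum_pos'
      · intro i hi
        exact Finset.sum_nonneg fun j hj => hterm i hi j hj
      · refine ⟨k, Finset.mem_range.mpr (by omega), ?_⟩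
        apply Finset.sum_pos'
        · intro j hj
          exact hterm k (Finset.mem_range.mpr (by omega)) j hj
        · refine ⟨k - 1, Finset.mem_range.mpr (by omega), ?_⟩
          have hcast : ((k-1 : ℕ) : ℝ) = (k:ℝ) - 1 := by
            push_cast [Nat.cast_sub hk1]; ring
          have heq : g k (k-1) + g (k-1) k
              = (((k:ℝ) - (k-1:ℕ)) * (a k * b (k-1) - a (k-1) * b k)) * x ^ (k+(k-1)) := by
            rw [hg]
            simp only
            rw [show (k-1) + k = k + (k-1) from Nat.add_comm _ k]
            ring
          rw [heq, hcast]
          have h1 : (0:ℝ) < (k:ℝ) - ((k:ℝ)-1) := by ring_nf; norm_num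
          apply mul_pos (mul_pos h1 (by linarith)) (by positivity)
    nlinarith [h2, hpos, hx]
end

section
/- Let A(x) = Σ_{k=0}^n a_k x^k and B(x) = Σ_{k=0}^n b_k x^k with all coefficients positive and a_n/b_n ≤ a_{n−1}/b_{n−1} ≤ ⋯ ≤ a_0/b_0. Then every coefficient of A'(x)B(x) − B'(x)A(x) is nonpositive, so A'(x)B(x) − B'(x)A(x) ≤ 0 for x > 0. -/
open Polynomial Finset

private lemma chain_ext (n : ℕ) (a b : ℕ → ℝ)
    (ha : ∀ k ≤ n, 0 < a k) (hb : ∀ k ≤ n, 0 < b k)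
    (hchain : ∀ k, 1 ≤ k → k ≤ n → a k * b (k - 1) ≤ a (k - 1) * b k) :
    ∀ k l, l ≤ k → k ≤ n → a k * b l ≤ a l * b k := by
  intro k
  induction k with
  | zero =>
    intro l hl _
    interval_cases l
    exact le_of_eq (by ring)
  | succ k ih =>
    intro l hl hk
    rcases Nat.lt_or_ge l (k + 1) with h | h
    · have hl' : l ≤ k := by omega
      have h1 := hchain (k + 1) (by omega) hk
      simp only [Nat.add_sub_cancel] at h1
      have h2 := ih l hl' (by omega)
      have hbk := hb k (by omega)
      have hbl := hb l (by omega)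
      have hbk1 := hb (k + 1) hk
      nlinarith [mul_le_mul_of_nonneg_right h1 hbl.le,
        mul_le_mul_of_nonneg_right h2 hbk1.le]
    · have : l = k + 1 := by omega
      subst this
      exact le_of_eq (by ring)

theorem stmt_9 (n : ℕ) (a b : ℕ → ℝ)
    (ha : ∀ k ≤ n, 0 < a k) (hb : ∀ k ≤ n, 0 < b k)
    (hchain : ∀ k, 1 ≤ k → k ≤ n → a k * b (k - 1) ≤ a (k - 1) * b k)
    (A B : Polynomial ℝ)
    (hA : A = ∑ k ∈ Finset.range (n + 1), Polynomial.C (a k) * Polynomial.X ^ k)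
    (hB : B = ∑ k ∈ Finset.range (n + 1), Polynomial.C (b k) * Polynomial.X ^ k) :
    (∀ m, (Polynomial.derivative A * B - Polynomial.derivative B * A).coeff m ≤ 0) ∧
    (∀ x : ℝ, 0 < x →
      (Polynomial.derivative A * B - Polynomial.derivative B * A).eval x ≤ 0) := by
  have hcA : ∀ k, A.coeff k = if k ≤ n then a k else 0 := by
    intro k
    simp [hA, finset_sum_coeff, coeff_C_mul, coeff_X_pow, Nat.lt_succ_iff, eq_comm]
  have hcB : ∀ k, B.coeff k = if k ≤ n then b k else 0 := by
    intro k
    simp [hB, finset_sum_coeff, coeff_C_mul, coeff_X_pow, Nat.lt_succ_iff, eq_comm]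
  have key : ∀ k l, l ≤ k → A.coeff k * B.coeff l ≤ A.coeff l * B.coeff k := by
    intro k l h
    rw [hcA, hcA, hcB, hcB]
    by_cases hk : k ≤ n
    · have hl : l ≤ n := le_trans h hk
      simp only [hk, hl, if_true]
      exact chain_ext n a b ha hb hchain k l h hk
    · simp [hk]
  -- coefficient formula
  have hco : ∀ m, (Polynomial.derivative A * B - Polynomial.derivative B * A).coeff m =
      ∑ i ∈ range (m + 1), ((i : ℝ) + 1) *
        (A.coeff (i + 1) * B.coeff (m - i) - B.coeff (i + 1) * A.coeff (m - i)) := by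
    intro m
    rw [coeff_sub, coeff_mul, coeff_mul,
      Finset.Nat.sum_antidiagonal_eq_sum_range_succ_mk,
      Finset.Nat.sum_antidiagonal_eq_sum_range_succ_mk, ← Finset.sum_sub_distrib]
    refine Finset.sum_congr rfl fun i _ => ?_
    rw [coeff_derivative, coeff_derivative]
    push_cast
    ring
  have main : ∀ m, (Polynomial.derivative A * B - Polynomial.derivative B * A).coeff m ≤ 0 := by
    intro m
    rw [hco m]
    set e : ℕ → ℝ := fun i =>
      A.coeff (i + 1) * B.coeff (m - i) - B.coeff (i + 1) * A.coeff (m - i) with he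
    have he_anti : ∀ i < m, e (m - 1 - i) = -e i := by
      intro i hi
      have h1 : m - 1 - i + 1 = m - i := by omega
      have h2 : m - (m - 1 - i) = i + 1 := by omega
      simp only [he, h1, h2]
      ring
    have he_npos : ∀ i, m ≤ 2 * i → e i ≤ 0 := by
      intro i hi
      have h := key (i + 1) (m - i) (by omega)
      simp only [he]
      linarith
    have he_nneg : ∀ i, 2 * i < m → 0 ≤ e i := by
      intro i hi
      have h := key (m - i) (i + 1) (by omega)
      simp only [he]
      linarith
    set S : ℝ := ∑ i ∈ range (m + 1), ((i : ℝ) + 1) * e i with hS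
    show S ≤ 0
    set T : ℝ := ∑ i ∈ range m, ((i : ℝ) + 1) * e i with hTdef
    have hT : T = ∑ j ∈ range m, ((m : ℝ) - j) * (-(e j)) := by
      rw [hTdef, ← Finset.sum_range_reflect (fun i => ((i : ℝ) + 1) * e i) m]
      refine Finset.sum_congr rfl fun j hj => ?_
      have hj' := Finset.mem_range.mp hj
      rw [he_anti j hj']
      have hc : ((m - 1 - j : ℕ) : ℝ) = (m : ℝ) - 1 - j := by
        have : (m - 1 - j : ℕ) = m - (j + 1) := by omega
        rw [this, Nat.cast_sub (by omega)]
        push_cast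
        ring
      rw [hc]
      ring
    have hSsplit : S = T + ((m : ℝ) + 1) * e m := by
      rw [hS, Finset.sum_range_succ, hTdef]
    have hterm : ∀ j ∈ range m,
        ((j : ℝ) + 1) * e j + ((m : ℝ) - j) * (-(e j)) ≤ 0 := by
      intro j hj
      rcases le_or_gt m (2 * j) with h | h
      · have h1 := he_npos j h
        have h2 : (m : ℝ) ≤ 2 * j := by exact_mod_cast h
        nlinarith [mul_nonneg (by linarith : (0:ℝ) ≤ 2 * (j:ℝ) + 1 - m)
          (neg_nonneg.mpr h1)]
      · have h1 := he_nneg j h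
        have h2 : 2 * (j : ℝ) + 1 ≤ m := by exact_mod_cast h
        nlinarith [mul_nonneg (by linarith : (0:ℝ) ≤ (m:ℝ) - (2 * (j:ℝ) + 1)) h1]
    have hsum : (∑ j ∈ range m,
        (((j : ℝ) + 1) * e j + ((m : ℝ) - j) * (-(e j)))) ≤ 0 :=
      Finset.sum_nonpos hterm
    have hsplit2 : (∑ j ∈ range m,
        (((j : ℝ) + 1) * e j + ((m : ℝ) - j) * (-(e j)))) = T + T := by
      rw [Finset.sum_add_distrib, ← hTdef, ← hT]
    have hem : ((m : ℝ) + 1) * e m ≤ 0 := by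
      have h1 := he_npos m (by omega)
      nlinarith [(by positivity : (0:ℝ) ≤ (m : ℝ) + 1)]
    linarith
  refine ⟨main, fun x hx => ?_⟩
  rw [Polynomial.eval_eq_sum_range]
  refine Finset.sum_nonpos fun i _ => ?_
  have h1 := main i
  nlinarith [pow_pos hx i]
end

section
/- Let a_1,…,a_q, b_1,…,b_q be positive reals and let e_m denote the m-th elementary symmetric polynomial. If e_m(b)/e_m(a) ≥ e_{m−1}(b)/e_{m−1}(a) for all m = 1,…,q (with e_0 = 1), then the rational function R(x) = ∏_{k=1}^q (a_k + x) / ∏_{k=1}^q (b_k + x) is monotone increasing on (0,∞). -/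
/-- `m`-th elementary symmetric polynomial of `c 0, …, c (q-1)`. -/
def esym (q m : ℕ) (c : ℕ → ℝ) : ℝ :=
  ∑ t ∈ (Finset.range q).powersetCard m, ∏ i ∈ t, c i

lemma esym_pos (q m : ℕ) (c : ℕ → ℝ) (hc : ∀ i < q, 0 < c i) (hm : m ≤ q) :
    0 < esym q m c := by
  apply Finset.sum_pos
  · intro t ht
    rw [Finset.mem_powersetCard] at ht
    exact Finset.prod_pos fun i hi => hc i (Finset.mem_range.mp (ht.1 hi))
  · exact Finset.powersetCard_nonempty.2 (by simpa using hm)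

lemma prod_eq_sum_esym (q : ℕ) (c : ℕ → ℝ) (x : ℝ) :
    ∏ k ∈ Finset.range q, (c k + x)
      = ∑ m ∈ Finset.range (q + 1), esym q m c * x ^ (q - m) := by
  rw [Finset.prod_add]
  rw [Finset.sum_powerset, Finset.card_range]
  refine Finset.sum_congr rfl fun m _ => ?_
  rw [esym, Finset.sum_mul]
  refine Finset.sum_congr rfl fun t ht => ?_
  rw [Finset.mem_powersetCard] at ht
  rw [Finset.prod_const, Finset.card_sdiff_of_subset ht.1, Finset.card_range, ht.2]

theorem stmt_10 (q : ℕ) (a b : ℕ → ℝ)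
    (ha : ∀ i < q, 0 < a i) (hb : ∀ i < q, 0 < b i)
    (hchain : ∀ m, 1 ≤ m → m ≤ q →
      esym q (m - 1) b / esym q (m - 1) a ≤ esym q m b / esym q m a) :
    MonotoneOn (fun x : ℝ =>
      (∏ k ∈ Finset.range q, (a k + x)) / (∏ k ∈ Finset.range q, (b k + x)))
      (Set.Ioi 0) := by
  -- chain extended by transitivity
  have hApos : ∀ m ≤ q, 0 < esym q m a := fun m hm => esym_pos q m a ha hm
  have hBpos : ∀ m ≤ q, 0 < esym q m b := fun m hm => esym_pos q m b hb hm
  have hchain' : ∀ m n, m ≤ n → n ≤ q →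
      esym q m b / esym q m a ≤ esym q n b / esym q n a := by
    intro m n hmn hnq
    induction n with
    | zero => simp_all
    | succ k ih =>
      rcases Nat.eq_or_lt_of_le hmn with h | h
      · rw [h]
      · have h1 : esym q m b / esym q m a ≤ esym q k b / esym q k a :=
          ih (Nat.lt_succ_iff.mp h) (Nat.le_of_succ_le hnq)
        have h2 := hchain (k + 1) (Nat.succ_le_succ (Nat.zero_le k)) hnq
        simpa using h1.trans h2
  have hcross : ∀ m n, m ≤ n → n ≤ q →
      esym q n a * esym q m b ≤ esym q m a * esym q n b := by
    intro m n hmn hnq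
    have := hchain' m n hmn hnq
    rw [div_le_div_iff₀ (hApos m (hmn.trans hnq)) (hApos n hnq)] at this
    linarith
  intro x hx y hy hxy
  simp only [Set.mem_Ioi] at hx hy
  have hPbx : 0 < ∏ k ∈ Finset.range q, (b k + x) :=
    Finset.prod_pos fun k hk => add_pos (hb k (Finset.mem_range.mp hk)) hx
  have hPby : 0 < ∏ k ∈ Finset.range q, (b k + y) :=
    Finset.prod_pos fun k hk => add_pos (hb k (Finset.mem_range.mp hk)) hy
  simp only
  rw [div_le_div_iff₀ hPbx hPby]
  rw [prod_eq_sum_esym q a x, prod_eq_sum_esym q a y,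
    prod_eq_sum_esym q b x, prod_eq_sum_esym q b y]
  rw [Finset.sum_mul_sum, Finset.sum_mul_sum]
  set r := Finset.range (q + 1)
  set A := fun m => esym q m a
  set B := fun m => esym q m b
  set F : ℕ → ℕ → ℝ := fun m n =>
    A m * B n * (y ^ (q - m) * x ^ (q - n) - x ^ (q - m) * y ^ (q - n)) with hF
  have hgoal : ∀ m n, A m * x ^ (q - m) * (B n * y ^ (q - n))
      + F m n = A m * y ^ (q - m) * (B n * x ^ (q - n)) := by
    intro m n; simp only [hF]; ring
  -- key pointwise lemma for m ≤ n
  have hkey : ∀ m n, m ≤ n → n ≤ q → 0 ≤ F m n + F n m := by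
    intro m n hmn hnq
    have hsym : F m n + F n m
        = (A m * B n - A n * B m) *
          (y ^ (q - m) * x ^ (q - n) - x ^ (q - m) * y ^ (q - n)) := by
      simp only [hF]; ring
    rw [hsym]
    apply mul_nonneg
    · have := hcross m n hmn hnq
      linarith
    · have hq : q - m = (n - m) + (q - n) := by omega
      rw [hq, pow_add, pow_add]
      have hyx : x ^ (n - m) ≤ y ^ (n - m) := pow_le_pow_left₀ hx.le hxy _
      have h1 : (0:ℝ) ≤ x ^ (q - n) * y ^ (q - n) :=
        mul_nonneg (pow_nonneg hx.le _) (pow_nonneg (hx.trans_le hxy).le _)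
      nlinarith [pow_nonneg hx.le (n - m)]
  have hkey' : ∀ m ∈ r, ∀ n ∈ r, 0 ≤ F m n + F n m := by
    intro m hm n hn
    rcases le_total m n with h | h
    · exact hkey m n h (by simp only [r, Finset.mem_range] at hn; omega)
    · have := hkey n m h (by simp only [r, Finset.mem_range] at hm; omega)
      linarith
  have hsumF : 0 ≤ ∑ m ∈ r, ∑ n ∈ r, F m n := by
    have h2 : 0 ≤ ∑ m ∈ r, ∑ n ∈ r, (F m n + F n m) :=
      Finset.sum_nonneg fun m hm => Finset.sum_nonneg fun n hn => hkey' m hm n hn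
    have hcomm : ∑ m ∈ r, ∑ n ∈ r, F n m = ∑ m ∈ r, ∑ n ∈ r, F m n :=
      Finset.sum_comm
    simp only [Finset.sum_add_distrib] at h2
    rw [hcomm] at h2
    linarith
  calc ∑ m ∈ r, ∑ n ∈ r, A m * x ^ (q - m) * (B n * y ^ (q - n))
      ≤ ∑ m ∈ r, ∑ n ∈ r, (A m * x ^ (q - m) * (B n * y ^ (q - n)) + F m n) := by
        simp only [Finset.sum_add_distrib]; linarith
    _ = ∑ m ∈ r, ∑ n ∈ r, A m * y ^ (q - m) * (B n * x ^ (q - n)) := by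
        refine Finset.sum_congr rfl fun m _ => Finset.sum_congr rfl fun n _ => ?_
        exact hgoal m n
end

section
/- If b_i > a_i > 0 for each i = 1,…,q, then the chain of inequalities e_q(b)/e_q(a) ≥ e_{q−1}(b)/e_{q−1}(a) ≥ ⋯ ≥ e_1(b)/e_1(a) ≥ 1 holds, where e_m denotes the m-th elementary symmetric polynomial in q variables. -/
open Finset

lemma crux (a b : ℕ → ℝ) (W : Finset ℕ) (k : ℕ) (hk : 1 ≤ k) (hW : W.card = 2*k - 1)
    (ha : ∀ i ∈ W, 0 < a i) (hab : ∀ i ∈ W, a i < b i) :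
    ∑ A ∈ W.powersetCard k, (∏ i ∈ W \ A, b i) * ∏ i ∈ A, a i
      ≤ ∑ A ∈ W.powersetCard k, (∏ i ∈ A, b i) * ∏ i ∈ W \ A, a i := by
  set g : Finset ℕ → ℝ := fun X => (∏ i ∈ X, b i) * ∏ i ∈ W \ X, a i with hg
  -- Step A : LHS = ∑ B ∈ P_{k-1}, g B
  have stepA : ∑ A ∈ W.powersetCard k, (∏ i ∈ W \ A, b i) * ∏ i ∈ A, a i
      = ∑ B ∈ W.powersetCard (k-1), g B := by
    refine sum_nbij' (fun A => W \ A) (fun B => W \ B) ?_ ?_ ?_ ?_ ?_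
    · intro A hA
      rw [mem_powersetCard] at hA ⊢
      refine ⟨sdiff_subset, ?_⟩
      rw [card_sdiff_of_subset hA.1, hW, hA.2]; omega
    · intro B hB
      rw [mem_powersetCard] at hB ⊢
      refine ⟨sdiff_subset, ?_⟩
      rw [card_sdiff_of_subset hB.1, hW, hB.2]; omega
    · intro A hA
      rw [mem_powersetCard] at hA
      exact Finset.sdiff_sdiff_eq_self hA.1
    · intro B hB
      rw [mem_powersetCard] at hB
      exact Finset.sdiff_sdiff_eq_self hB.1
    · intro A hA
      rw [mem_powersetCard] at hA
      simp only [hg, Finset.sdiff_sdiff_eq_self hA.1]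
  rw [stepA]
  -- multiply both sides by k
  have hkpos : (0:ℝ) < k := by exact_mod_cast hk
  rw [← mul_le_mul_iff_right₀ hkpos]
  -- RHS : k * ∑_{A ∈ P_k} g A = ∑_A ∑_{i∈A} g A
  have hR : (k:ℝ) * ∑ A ∈ W.powersetCard k, g A
      = ∑ p ∈ (W.powersetCard k).sigma (fun A => A), g p.1 := by
    rw [Finset.sum_sigma, mul_sum]
    refine sum_congr rfl ?_
    intro A hA
    rw [mem_powersetCard] at hA
    simp only []
    rw [sum_const, hA.2, nsmul_eq_mul]
  have hL : (k:ℝ) * ∑ B ∈ W.powersetCard (k-1), g B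
      = ∑ p ∈ (W.powersetCard (k-1)).sigma (fun B => W \ B), g p.1 := by
    rw [Finset.sum_sigma, mul_sum]
    refine sum_congr rfl ?_
    intro B hB
    rw [mem_powersetCard] at hB
    simp only []
    rw [sum_const, card_sdiff_of_subset hB.1, hW, hB.2, nsmul_eq_mul]
    have h2 : 2*k-1-(k-1) = k := by omega
    rw [h2]
  rw [hR, hL]
  -- bijection : ∑ over sigma P_k = ∑ over sigma P_{k-1} of g (insert i B)
  have hbij : ∑ p ∈ (W.powersetCard k).sigma (fun A => A), g p.1
      = ∑ p ∈ (W.powersetCard (k-1)).sigma (fun B => W \ B), g (insert p.2 p.1) := by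
    refine sum_nbij' (fun p => ⟨p.1.erase p.2, p.2⟩) (fun p => ⟨insert p.2 p.1, p.2⟩) ?_ ?_ ?_ ?_ ?_
    · rintro ⟨A, i⟩ hp
      rw [mem_sigma, mem_powersetCard] at hp ⊢
      obtain ⟨⟨hAW, hAc⟩, hi⟩ := hp
      refine ⟨⟨(erase_subset _ _).trans hAW, ?_⟩, ?_⟩
      · rw [card_erase_of_mem hi, hAc]
      · simp only [mem_sdiff, mem_erase]
        exact ⟨hAW hi, fun h => h.1 rfl⟩
    · rintro ⟨B, i⟩ hp
      rw [mem_sigma, mem_powersetCard] at hp ⊢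
      obtain ⟨⟨hBW, hBc⟩, hi⟩ := hp
      rw [mem_sdiff] at hi
      refine ⟨⟨insert_subset hi.1 hBW, ?_⟩, mem_insert_self _ _⟩
      rw [card_insert_of_notMem hi.2, hBc]; omega
    · rintro ⟨A, i⟩ hp
      rw [mem_sigma] at hp
      simp [insert_erase hp.2]
    · rintro ⟨B, i⟩ hp
      rw [mem_sigma, mem_sdiff] at hp
      simp [erase_insert hp.2.2]
    · rintro ⟨A, i⟩ hp
      rw [mem_sigma] at hp
      simp [insert_erase hp.2]
  rw [hbij]
  refine sum_le_sum ?_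
  rintro ⟨B, i⟩ hp
  rw [mem_sigma, mem_powersetCard, mem_sdiff] at hp
  obtain ⟨⟨hBW, hBc⟩, hiW, hiB⟩ := hp
  -- g B ≤ g (insert i B)
  have hsd : W \ B = insert i (W \ insert i B) := by
    rw [sdiff_insert, insert_erase]
    exact mem_sdiff.2 ⟨hiW, hiB⟩
  have hposb : ∀ j ∈ B, 0 < b j := fun j hj => (ha j (hBW hj)).trans (hab j (hBW hj))
  have hpb : (0:ℝ) < ∏ j ∈ B, b j := prod_pos hposb
  have hpa : (0:ℝ) < ∏ j ∈ W \ insert i B, a j :=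
    prod_pos fun j hj => ha j (mem_sdiff.1 hj).1
  simp only [hg]
  rw [prod_insert hiB, hsd, prod_insert (by simp)]
  have : a i ≤ b i := (hab i hiW).le
  calc (∏ j ∈ B, b j) * (a i * ∏ j ∈ W \ insert i B, a j)
      = a i * ((∏ j ∈ B, b j) * ∏ j ∈ W \ insert i B, a j) := by ring
    _ ≤ b i * ((∏ j ∈ B, b j) * ∏ j ∈ W \ insert i B, a j) := by
        apply mul_le_mul_of_nonneg_right this (by positivity)
    _ = b i * (∏ j ∈ B, b j) * ∏ j ∈ W \ insert i B, a j := by ring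

lemma key (q m : ℕ) (a b : ℕ → ℝ) (ha : ∀ i < q, 0 < a i) (hab : ∀ i < q, a i < b i)
    (hm : 1 ≤ m) (hmq : m ≤ q) :
    (∑ S ∈ (Finset.range q).powersetCard (m-1), ∏ i ∈ S, b i) *
      (∑ T ∈ (Finset.range q).powersetCard m, ∏ i ∈ T, a i)
    ≤ (∑ S ∈ (Finset.range q).powersetCard m, ∏ i ∈ S, b i) *
      (∑ T ∈ (Finset.range q).powersetCard (m-1), ∏ i ∈ T, a i) := by
  classical
  set D := (Finset.range q).powersetCard m ×ˢ (Finset.range q).powersetCard (m-1) with hD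
  set KS := D.image (fun p => (p.1 ∩ p.2, p.1 ∪ p.2)) with hKS
  set E := KS.sigma (fun y => ((y.2 \ y.1).powersetCard (m - y.1.card))) with hE
  -- facts about elements of D
  have hDfact : ∀ p ∈ D, p.1 ⊆ Finset.range q ∧ p.2 ⊆ Finset.range q ∧
      p.1.card = m ∧ p.2.card = m - 1 := by
    intro p hp
    rw [hD, mem_product, mem_powersetCard, mem_powersetCard] at hp
    exact ⟨hp.1.1, hp.2.1, hp.1.2, hp.2.2⟩
  -- facts about elements of KS
  have hKSfact : ∀ y ∈ KS, y.1 ⊆ y.2 ∧ y.2 ⊆ Finset.range q ∧ y.1.card + 1 ≤ m ∧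
      (y.2 \ y.1).card = 2*(m - y.1.card) - 1 := by
    rintro ⟨I, U⟩ hy
    rw [hKS, mem_image] at hy
    obtain ⟨p, hp, hKp⟩ := hy
    obtain ⟨hS, hT, hcS, hcT⟩ := hDfact p hp
    rw [Prod.mk.injEq] at hKp
    obtain ⟨rfl, rfl⟩ := hKp
    dsimp only
    have h1 : p.1 ∩ p.2 ⊆ p.1 ∪ p.2 := (inter_subset_left).trans subset_union_left
    have h2 : p.1 ∪ p.2 ⊆ Finset.range q := union_subset hS hT
    have h3 : (p.1 ∩ p.2).card ≤ m - 1 := hcT ▸ card_le_card inter_subset_right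
    have h4 := card_union_add_card_inter p.1 p.2
    have h6 := card_sdiff_of_subset h1
    exact ⟨h1, h2, by omega, by omega⟩
  -- transport both double sums to E
  have transport : ∀ (c d : ℕ → ℝ),
      ∑ p ∈ D, (∏ i ∈ p.1, c i) * ∏ i ∈ p.2, d i
      = ∑ e ∈ E, ((∏ i ∈ e.1.1, c i) * ∏ i ∈ e.2, c i) *
          ((∏ i ∈ e.1.1, d i) * ∏ i ∈ (e.1.2 \ e.1.1) \ e.2, d i) := by
    intro c d
    refine sum_nbij' (fun p => ⟨(p.1 ∩ p.2, p.1 ∪ p.2), p.1 \ p.2⟩)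
      (fun e => (e.1.1 ∪ e.2, e.1.1 ∪ ((e.1.2 \ e.1.1) \ e.2))) ?_ ?_ ?_ ?_ ?_
    · -- maps to
      rintro ⟨S, T⟩ hp
      obtain ⟨hS, hT, hcS, hcT⟩ := hDfact _ hp
      dsimp only at hS hT hcS hcT ⊢
      rw [hE, mem_sigma]
      refine ⟨mem_image_of_mem _ hp, ?_⟩
      rw [mem_powersetCard]
      dsimp only
      constructor
      · intro x hx
        rw [mem_sdiff] at hx
        simp only [mem_sdiff, mem_union, mem_inter]
        exact ⟨Or.inl hx.1, fun h => hx.2 h.2⟩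
      · have e0 : S \ T = S \ (S ∩ T) := by
          ext x; simp only [mem_sdiff, mem_inter]; tauto
        rw [e0, card_sdiff_of_subset inter_subset_left, hcS]
    · -- inverse maps to
      rintro ⟨⟨I, U⟩, A⟩ he
      rw [hE, mem_sigma] at he
      obtain ⟨hy, hA⟩ := he
      obtain ⟨hIU, hUq, hcI, hcW⟩ := hKSfact _ hy
      rw [mem_powersetCard] at hA
      dsimp only at hIU hUq hcI hcW hA ⊢
      obtain ⟨hAW, hcA⟩ := hA
      have hdisj1 : Disjoint I A := by
        refine disjoint_left.2 fun x hx hxA => ?_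
        exact (mem_sdiff.1 (hAW hxA)).2 hx
      have hdisj2 : Disjoint I ((U \ I) \ A) := by
        refine disjoint_left.2 fun x hx hxB => ?_
        exact (mem_sdiff.1 (mem_sdiff.1 hxB).1).2 hx
      have hcWA : ((U \ I) \ A).card = m - I.card - 1 := by
        rw [card_sdiff_of_subset hAW, hcW, hcA]; omega
      rw [hD, mem_product, mem_powersetCard, mem_powersetCard]
      have hAq : A ⊆ Finset.range q := fun x hx => hUq (mem_sdiff.1 (hAW hx)).1
      have hWq : (U \ I) \ A ⊆ Finset.range q :=
        fun x hx => hUq (mem_sdiff.1 (mem_sdiff.1 hx).1).1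
      refine ⟨⟨union_subset (hIU.trans hUq) hAq, ?_⟩,
              ⟨union_subset (hIU.trans hUq) hWq, ?_⟩⟩
      · rw [card_union_of_disjoint hdisj1, hcA]; omega
      · rw [card_union_of_disjoint hdisj2, hcWA]; omega
    · -- left inverse
      rintro ⟨S, T⟩ hp
      dsimp only
      obtain ⟨hS, hT, hcS, hcT⟩ := hDfact _ hp
      refine Prod.ext ?_ ?_ <;> dsimp only
      · ext x
        simp only [mem_union, mem_inter, mem_sdiff]
        tauto
      · ext x
        simp only [mem_union, mem_inter, mem_sdiff]
        tauto
    · -- right inverse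
      rintro ⟨⟨I, U⟩, A⟩ he
      rw [hE, mem_sigma] at he
      obtain ⟨hy, hA⟩ := he
      obtain ⟨hIU, hUq, hcI, hcW⟩ := hKSfact _ hy
      rw [mem_powersetCard] at hA
      dsimp only at hIU hUq hcI hcW hA ⊢
      obtain ⟨hAW, hcA⟩ := hA
      have hmemA : ∀ x ∈ A, x ∈ U ∧ x ∉ I := fun x hx => mem_sdiff.1 (hAW hx)
      have e1 : (I ∪ A) ∩ (I ∪ ((U \ I) \ A)) = I := by
        ext x
        simp only [mem_union, mem_inter, mem_sdiff]
        constructor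
        · rintro ⟨h1 | h1, h2 | h2⟩ <;> first | exact h1 | exact h2 | tauto
        · tauto
      have e2 : (I ∪ A) ∪ (I ∪ ((U \ I) \ A)) = U := by
        ext x
        simp only [mem_union, mem_sdiff]
        constructor
        · rintro ((h | h) | h | h)
          · exact hIU h
          · exact (hmemA x h).1
          · exact hIU h
          · exact h.1.1
        · intro hx
          by_cases h1 : x ∈ I
          · tauto
          · by_cases h2 : x ∈ A <;> tauto
      have e3 : (I ∪ A) \ (I ∪ ((U \ I) \ A)) = A := by
        ext x
        simp only [mem_union, mem_sdiff]
        constructor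
        · rintro ⟨h1 | h1, h2⟩
          · exact absurd (Or.inl h1) h2
          · exact h1
        · intro hx
          have := hmemA x hx
          tauto
      rw [e1, e2, e3]
    · -- values
      rintro ⟨S, T⟩ hp
      obtain ⟨hS, hT, hcS, hcT⟩ := hDfact _ hp
      dsimp only at hS hT hcS hcT ⊢
      have e1 : S = (S ∩ T) ∪ (S \ T) := by
        ext x; simp only [mem_union, mem_inter, mem_sdiff]; tauto
      have e2 : T = (S ∩ T) ∪ (((S ∪ T) \ (S ∩ T)) \ (S \ T)) := by
        ext x; simp only [mem_union, mem_inter, mem_sdiff]; tauto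
      have d1 : Disjoint (S ∩ T) (S \ T) := by
        refine disjoint_left.2 fun x hx hx2 => ?_
        rw [mem_inter] at hx; rw [mem_sdiff] at hx2; exact hx2.2 hx.2
      have d2 : Disjoint (S ∩ T) (((S ∪ T) \ (S ∩ T)) \ (S \ T)) := by
        refine disjoint_left.2 fun x hx hx2 => ?_
        rw [mem_sdiff, mem_sdiff] at hx2; exact hx2.1.2 hx
      calc (∏ i ∈ S, c i) * ∏ i ∈ T, d i
          = (∏ i ∈ (S ∩ T) ∪ (S \ T), c i) *
            ∏ i ∈ (S ∩ T) ∪ (((S ∪ T) \ (S ∩ T)) \ (S \ T)), d i := by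
            rw [← e1, ← e2]
        _ = _ := by rw [prod_union d1, prod_union d2]
  -- rewrite goal as sums over D
  rw [sum_mul_sum, sum_mul_sum]
  have hL : ∑ S ∈ (Finset.range q).powersetCard (m-1),
      ∑ T ∈ (Finset.range q).powersetCard m, (∏ i ∈ S, b i) * ∏ i ∈ T, a i
      = ∑ p ∈ D, (∏ i ∈ p.1, a i) * ∏ i ∈ p.2, b i := by
    rw [Finset.sum_comm]
    rw [hD, Finset.sum_product]
    exact sum_congr rfl fun S hS => sum_congr rfl fun T hT => by ring
  have hR : ∑ S ∈ (Finset.range q).powersetCard m,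
      ∑ T ∈ (Finset.range q).powersetCard (m-1), (∏ i ∈ S, b i) * ∏ i ∈ T, a i
      = ∑ p ∈ D, (∏ i ∈ p.1, b i) * ∏ i ∈ p.2, a i := by
    rw [hD, Finset.sum_product]
  rw [hL, hR, transport a b, transport b a]
  -- now compare fiberwise over KS
  rw [hE, Finset.sum_sigma, Finset.sum_sigma]
  refine sum_le_sum fun y hy => ?_
  obtain ⟨hIU, hUq, hcI, hcW⟩ := hKSfact y hy
  have hIq : y.1 ⊆ Finset.range q := hIU.trans hUq
  have hbIpos : (0:ℝ) ≤ (∏ i ∈ y.1, b i) * ∏ i ∈ y.1, a i := by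
    have h1 : (0:ℝ) < ∏ i ∈ y.1, a i :=
      prod_pos fun i hi => ha i (mem_range.1 (hIq hi))
    have h2 : (0:ℝ) < ∏ i ∈ y.1, b i :=
      prod_pos fun i hi => (ha i (mem_range.1 (hIq hi))).trans (hab i (mem_range.1 (hIq hi)))
    positivity
  have hc : ∀ A ∈ (y.2 \ y.1).powersetCard (m - y.1.card),
      ((∏ i ∈ y.1, a i) * ∏ i ∈ A, a i) * ((∏ i ∈ y.1, b i) * ∏ i ∈ (y.2 \ y.1) \ A, b i)
      = ((∏ i ∈ y.1, b i) * ∏ i ∈ y.1, a i) * ((∏ i ∈ (y.2 \ y.1) \ A, b i) * ∏ i ∈ A, a i) := by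
    intro A hA; ring
  have hc2 : ∀ A ∈ (y.2 \ y.1).powersetCard (m - y.1.card),
      ((∏ i ∈ y.1, b i) * ∏ i ∈ A, b i) * ((∏ i ∈ y.1, a i) * ∏ i ∈ (y.2 \ y.1) \ A, a i)
      = ((∏ i ∈ y.1, b i) * ∏ i ∈ y.1, a i) * ((∏ i ∈ A, b i) * ∏ i ∈ (y.2 \ y.1) \ A, a i) := by
    intro A hA; ring
  rw [sum_congr rfl hc, sum_congr rfl hc2, ← mul_sum, ← mul_sum]
  refine mul_le_mul_of_nonneg_left ?_ hbIpos
  refine crux a b (y.2 \ y.1) (m - y.1.card) (by omega) hcW ?_ ?_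
  · intro i hi
    exact ha i (mem_range.1 (hUq (mem_sdiff.1 hi).1))
  · intro i hi
    exact hab i (mem_range.1 (hUq (mem_sdiff.1 hi).1))

theorem stmt_11 (q : ℕ) (a b : ℕ → ℝ)
    (ha : ∀ i < q, 0 < a i) (hab : ∀ i < q, a i < b i) :
    ∀ m, 1 ≤ m → m ≤ q →
      esym q (m - 1) b / esym q (m - 1) a ≤ esym q m b / esym q m a := by
  intro m hm hmq
  have hpos : ∀ n, n ≤ q → 0 < esym q n a := by
    intro n hn
    unfold esym
    apply sum_pos
    · intro t ht
      rw [mem_powersetCard] at ht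
      exact prod_pos fun i hi => ha i (mem_range.1 (ht.1 hi))
    · rw [powersetCard_nonempty, card_range]
      exact hn
  unfold esym at hpos ⊢
  rw [div_le_div_iff₀ (hpos (m-1) (by omega)) (hpos m hmq)]
  exact key q m a b ha hab hm hmq
end

section
/- For b_1, b_2 > 0 and positive a_1, a_2, the function x ↦ (a_1+x)(a_2+x)/[(b_1+x)(b_2+x)] is increasing on (0,∞) if and only if b_1b_2/(a_1a_2) ≥ (b_1+b_2)/(a_1+a_2) ≥ 1. -/
open Filter Topology

theorem stmt_12 (a₁ a₂ b₁ b₂ : ℝ) (ha₁ : 0 < a₁) (ha₂ : 0 < a₂)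
    (hb₁ : 0 < b₁) (hb₂ : 0 < b₂) :
    MonotoneOn (fun x : ℝ => (a₁ + x) * (a₂ + x) / ((b₁ + x) * (b₂ + x))) (Set.Ioi 0) ↔
      (1 ≤ (b₁ + b₂) / (a₁ + a₂) ∧ (b₁ + b₂) / (a₁ + a₂) ≤ b₁ * b₂ / (a₁ * a₂)) := by
  set f : ℝ → ℝ := fun x => (a₁ + x) * (a₂ + x) / ((b₁ + x) * (b₂ + x)) with hf
  have hS : 0 < a₁ + a₂ := by linarith
  have hP : 0 < a₁ * a₂ := by positivity
  have h1 : (1 ≤ (b₁ + b₂) / (a₁ + a₂)) ↔ a₁ + a₂ ≤ b₁ + b₂ := one_le_div hS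
  have h2 : ((b₁ + b₂) / (a₁ + a₂) ≤ b₁ * b₂ / (a₁ * a₂)) ↔
      (b₁ + b₂) * (a₁ * a₂) ≤ b₁ * b₂ * (a₁ + a₂) := div_le_div_iff₀ hS hP
  rw [h1, h2]
  have hDpos : ∀ x : ℝ, 0 < x → 0 < (b₁ + x) * (b₂ + x) := by
    intro x hx; positivity
  constructor
  · intro hmono
    -- f tends to 1 at infinity
    have htop : Tendsto f atTop (𝓝 1) := by
      have h1' : Tendsto (fun x : ℝ => (a₁ / x + 1) * (a₂ / x + 1) / ((b₁ / x + 1) * (b₂ / x + 1)))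
          atTop (𝓝 1) := by
        have hz : ∀ c : ℝ, Tendsto (fun x : ℝ => c / x + 1) atTop (𝓝 1) := by
          intro c
          have h0 : Tendsto (fun x : ℝ => c / x) atTop (𝓝 0) := by
            simpa [div_eq_mul_inv] using tendsto_inv_atTop_zero.const_mul c
          simpa using h0.add (tendsto_const_nhds (x := (1:ℝ)))
        have := (((hz a₁).mul (hz a₂)).div ((hz b₁).mul (hz b₂)) (by norm_num))
        rw [show ((1:ℝ) * 1 / (1 * 1)) = 1 by norm_num] at this
        exact this
      refine h1'.congr' ?_
      filter_upwards [eventually_gt_atTop (0:ℝ)] with x hx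
      have hx' : x ≠ 0 := ne_of_gt hx
      have hb1 : b₁ + x ≠ 0 := by linarith
      have hb2 : b₂ + x ≠ 0 := by linarith
      simp only [hf]
      field_simp
      try ring
    -- f x ≤ 1 for all x > 0
    have hle1 : ∀ x : ℝ, 0 < x → f x ≤ 1 := by
      intro x hx
      refine ge_of_tendsto htop ?_
      filter_upwards [eventually_ge_atTop (max x 1)] with y hy
      exact hmono (Set.mem_Ioi.2 hx)
        (Set.mem_Ioi.2 (lt_of_lt_of_le one_pos (le_trans (le_max_right x 1) hy)))
        (le_trans (le_max_left x 1) hy)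
    -- hence N ≤ D pointwise
    have hND : ∀ x : ℝ, 0 < x → (a₁ + x) * (a₂ + x) ≤ (b₁ + x) * (b₂ + x) := by
      intro x hx
      have := hle1 x hx
      rw [hf, div_le_one (hDpos x hx)] at this
      exact this
    -- S ≤ T via limit
    have hST : a₁ + a₂ ≤ b₁ + b₂ := by
      have key : ∀ x : ℝ, 0 < x → (a₁ + a₂) - (b₁ + b₂) ≤ (b₁ * b₂ - a₁ * a₂) / x := by
        intro x hx
        have := hND x hx
        rw [le_div_iff₀ hx]
        nlinarith
      have hlim : Tendsto (fun x : ℝ => (b₁ * b₂ - a₁ * a₂) / x) atTop (𝓝 0) := by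
        simpa [div_eq_mul_inv] using tendsto_inv_atTop_zero.const_mul (b₁ * b₂ - a₁ * a₂)
      have : (a₁ + a₂) - (b₁ + b₂) ≤ 0 := by
        refine ge_of_tendsto hlim ?_
        filter_upwards [eventually_gt_atTop (0:ℝ)] with x hx using key x hx
      linarith
    -- f tends to P/Q at 0+
    have h0 : Tendsto f (𝓝[>] (0:ℝ)) (𝓝 (a₁ * a₂ / (b₁ * b₂))) := by
      have hc : ContinuousAt f 0 := by
        apply ContinuousAt.div
        · fun_prop
        · fun_prop
        · simpa using (by positivity : (0:ℝ) < (b₁ + 0) * (b₂ + 0)).ne'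
      have : Tendsto f (𝓝 (0:ℝ)) (𝓝 (f 0)) := hc
      have hf0 : f 0 = a₁ * a₂ / (b₁ * b₂) := by simp [hf]
      rw [hf0] at this
      exact this.mono_left nhdsWithin_le_nhds
    -- P/Q ≤ f x for x > 0
    have hge : ∀ x : ℝ, 0 < x → a₁ * a₂ / (b₁ * b₂) ≤ f x := by
      intro x hx
      refine le_of_tendsto h0 ?_
      filter_upwards [Ioo_mem_nhdsGT_of_mem (Set.mem_Ico.2 ⟨le_refl 0, hx⟩)] with y hy
      exact hmono (Set.mem_Ioi.2 hy.1) (Set.mem_Ioi.2 hx) (le_of_lt hy.2)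
    -- pointwise polynomial inequality at 0+
    have hpoly : ∀ x : ℝ, 0 < x →
        0 ≤ (b₁ * b₂ - a₁ * a₂) * x + (b₁ * b₂ * (a₁ + a₂) - (b₁ + b₂) * (a₁ * a₂)) := by
      intro x hx
      have := hge x hx
      rw [hf, div_le_div_iff₀ (by positivity) (hDpos x hx)] at this
      nlinarith
    have hlim0 : Tendsto (fun x : ℝ =>
        (b₁ * b₂ - a₁ * a₂) * x + (b₁ * b₂ * (a₁ + a₂) - (b₁ + b₂) * (a₁ * a₂)))
        (𝓝[>] (0:ℝ)) (𝓝 (b₁ * b₂ * (a₁ + a₂) - (b₁ + b₂) * (a₁ * a₂))) := by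
      have : ContinuousAt (fun x : ℝ =>
          (b₁ * b₂ - a₁ * a₂) * x + (b₁ * b₂ * (a₁ + a₂) - (b₁ + b₂) * (a₁ * a₂))) 0 := by
        fun_prop
      have h := this.tendsto.mono_left (nhdsWithin_le_nhds (s := Set.Ioi (0:ℝ)))
      simpa using h
    have hfin : 0 ≤ b₁ * b₂ * (a₁ + a₂) - (b₁ + b₂) * (a₁ * a₂) := by
      refine ge_of_tendsto hlim0 ?_
      filter_upwards [self_mem_nhdsWithin] with x hx using hpoly x hx
    exact ⟨hST, by linarith⟩
  · rintro ⟨hST, hQP⟩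
    have hPQ : a₁ * a₂ ≤ b₁ * b₂ := by nlinarith
    have hderiv : ∀ x : ℝ, 0 < x → HasDerivAt f
        ((((a₂ + x) + (a₁ + x)) * ((b₁ + x) * (b₂ + x)) -
          (a₁ + x) * (a₂ + x) * ((b₂ + x) + (b₁ + x))) / ((b₁ + x) * (b₂ + x))^2) x := by
      intro x hx
      have hN : HasDerivAt (fun x : ℝ => (a₁ + x) * (a₂ + x)) ((a₂ + x) + (a₁ + x)) x := by
        have := (((hasDerivAt_id x).const_add a₁).mul ((hasDerivAt_id x).const_add a₂))
        simp only [id, one_mul, mul_one] at this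
        exact this
      have hD : HasDerivAt (fun x : ℝ => (b₁ + x) * (b₂ + x)) ((b₂ + x) + (b₁ + x)) x := by
        have := (((hasDerivAt_id x).const_add b₁).mul ((hasDerivAt_id x).const_add b₂))
        simp only [id, one_mul, mul_one] at this
        exact this
      have := hN.div hD (ne_of_gt (hDpos x hx))
      exact this
    refine monotoneOn_of_deriv_nonneg (convex_Ioi 0) ?_ ?_ ?_
    · intro x hx
      exact ((hderiv x hx).differentiableAt.continuousAt).continuousWithinAt
    · intro x hx
      rw [interior_Ioi] at hx
      exact ((hderiv x hx).differentiableAt).differentiableWithinAt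
    · intro x hx
      rw [interior_Ioi, Set.mem_Ioi] at hx
      rw [(hderiv x hx).deriv]
      apply div_nonneg _ (sq_nonneg _)
      nlinarith [sq_nonneg x, mul_pos hx hx, hx.le, mul_nonneg hx.le hx.le,
        mul_nonneg (mul_nonneg hx.le hx.le) (sub_nonneg.2 hST),
        mul_nonneg hx.le (sub_nonneg.2 hPQ)]
end

section
/- Let g(a,x) = Σ_{n≥0} g_n Γ(a+n) x^n where g_n > 0. Then for b > a > 0 and δ > 0, every power series coefficient of g(a+δ,x)g(b,x) − g(b+δ,x)g(a,x) is negative; consequently for x > 0, g(a+δ,x)g(b,x) < g(b+δ,x)g(a,x), i.e., a ↦ g(a,x) is strictly log-convex. -/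
open Real Finset

/-- Strict midpoint inequality for `log ∘ Gamma`, obtained from the non-strict
convexity of `log ∘ Gamma` together with `Γ(x+1) = x Γ(x)` and strict concavity
of `log`. -/
lemma logGamma_strict_key (x₁ x₂ l : ℝ) (h₁ : 0 < x₁) (h₂ : 0 < x₂) (hne : x₁ ≠ x₂)
    (hl : 0 < l) (hl1 : l < 1) :
    Real.log (Real.Gamma (l * x₁ + (1 - l) * x₂)) <
      l * Real.log (Real.Gamma x₁) + (1 - l) * Real.log (Real.Gamma x₂) := by
  have hm : (0:ℝ) < 1 - l := by linarith
  set y : ℝ := l * x₁ + (1 - l) * x₂ with hy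
  have hypos : 0 < y := by positivity
  -- convexity of log Γ at the shifted points
  have hmem₁ : (x₁ + 1) ∈ Set.Ioi (0:ℝ) := by simpa using by linarith
  have hmem₂ : (x₂ + 1) ∈ Set.Ioi (0:ℝ) := by simpa using by linarith
  have hconv := Real.convexOn_log_Gamma.2 hmem₁ hmem₂ hl.le hm.le (by ring)
  have hptx : l • (x₁ + 1) + (1 - l) • (x₂ + 1) = y + 1 := by
    simp only [smul_eq_mul]; ring
  rw [hptx] at hconv
  simp only [Function.comp, smul_eq_mul] at hconv
  -- strict concavity of log
  have hlog := strictConcaveOn_log_Ioi.2 (Set.mem_Ioi.mpr h₁) (Set.mem_Ioi.mpr h₂) hne hl hm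
    (by ring)
  simp only [smul_eq_mul] at hlog
  -- Γ(z+1) = z Γ(z)
  have hrec : ∀ z : ℝ, 0 < z → Real.log (Real.Gamma (z + 1)) =
      Real.log z + Real.log (Real.Gamma z) := by
    intro z hz
    rw [Real.Gamma_add_one hz.ne', Real.log_mul hz.ne' (Real.Gamma_pos_of_pos hz).ne']
  rw [hrec _ hypos, hrec _ h₁, hrec _ h₂] at hconv
  nlinarith [hconv, hlog]

/-- Strict "box" inequality for the Gamma function: the ratio `Γ(q+·)/Γ(p+·)` is
strictly increasing for `p < q`. -/
lemma gamma_box_lt (p q s t : ℝ) (hp : 0 < p) (hpq : p < q) (hs : 0 ≤ s) (hst : s < t) :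
    Real.Gamma (p + t) * Real.Gamma (q + s) < Real.Gamma (p + s) * Real.Gamma (q + t) := by
  have hx₁ : (0:ℝ) < p + s := by linarith
  have hx₂ : (0:ℝ) < q + t := by linarith
  have hne : p + s ≠ q + t := by intro h; linarith
  set D : ℝ := (q - p) + (t - s) with hD
  have hDpos : 0 < D := by simp only [hD]; linarith
  set l : ℝ := (q - p) / D with hl
  have hl0 : 0 < l := div_pos (by linarith) hDpos
  have hl1 : l < 1 := by
    rw [hl, div_lt_one hDpos]; simp only [hD]; linarith
  have e₁ : l * (p + s) + (1 - l) * (q + t) = p + t := by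
    have hlD : l * ((q - p) + (t - s)) = q - p := by rw [← hD, hl]; exact div_mul_cancel₀ _ hDpos.ne'
    linear_combination (-1:ℝ) * hlD
  have e₂ : (1 - l) * (p + s) + (1 - (1 - l)) * (q + t) = q + s := by
    have hlD : l * ((q - p) + (t - s)) = q - p := by rw [← hD, hl]; exact div_mul_cancel₀ _ hDpos.ne'
    linear_combination hlD
  have k₁ := logGamma_strict_key (p + s) (q + t) l hx₁ hx₂ hne hl0 hl1
  have k₂ := logGamma_strict_key (p + s) (q + t) (1 - l) hx₁ hx₂ hne (by linarith) (by linarith)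
  rw [e₁] at k₁
  rw [e₂] at k₂
  have hlog : Real.log (Real.Gamma (p + t) * Real.Gamma (q + s)) <
      Real.log (Real.Gamma (p + s) * Real.Gamma (q + t)) := by
    have g₁ := Real.Gamma_pos_of_pos (show (0:ℝ) < p + t by linarith)
    have g₂ := Real.Gamma_pos_of_pos (show (0:ℝ) < q + s by linarith)
    have g₃ := Real.Gamma_pos_of_pos hx₁
    have g₄ := Real.Gamma_pos_of_pos hx₂
    rw [Real.log_mul g₁.ne' g₂.ne', Real.log_mul g₃.ne' g₄.ne']
    nlinarith [k₁, k₂]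
  have g₁ := Real.Gamma_pos_of_pos (show (0:ℝ) < p + t by linarith)
  have g₂ := Real.Gamma_pos_of_pos (show (0:ℝ) < q + s by linarith)
  have g₃ := Real.Gamma_pos_of_pos hx₁
  have g₄ := Real.Gamma_pos_of_pos hx₂
  exact (Real.log_lt_log_iff (by positivity) (by positivity)).mp hlog

/-- Non-strict version of the box inequality. -/
lemma gamma_box_le (p q s t : ℝ) (hp : 0 < p) (hpq : p < q) (hs : 0 ≤ s) (hst : s ≤ t) :
    Real.Gamma (p + t) * Real.Gamma (q + s) ≤ Real.Gamma (p + s) * Real.Gamma (q + t) := by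
  rcases eq_or_lt_of_le hst with h | h
  · subst h; rw [mul_comm]
  · exact (gamma_box_lt p q s t hp hpq hs h).le

/-- The key pair inequality, for `s ≤ t`. -/
lemma gamma_pair_aux (a b δ s t : ℝ) (ha : 0 < a) (hab : a < b) (hδ : 0 < δ)
    (hs : 0 ≤ s) (hst : s ≤ t) :
    (Real.Gamma (a + δ + s) * Real.Gamma (b + t) - Real.Gamma (b + δ + s) * Real.Gamma (a + t)) +
      (Real.Gamma (a + δ + t) * Real.Gamma (b + s) - Real.Gamma (b + δ + t) * Real.Gamma (a + s))
      < 0 := by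
  have ht : 0 ≤ t := hs.trans hst
  set p1 := Real.Gamma (a + s) with hp1'
  set p2 := Real.Gamma (a + t) with hp2'
  set p3 := Real.Gamma (a + δ + s) with hp3'
  set p4 := Real.Gamma (a + δ + t) with hp4'
  set q1 := Real.Gamma (b + s) with hq1'
  set q2 := Real.Gamma (b + t) with hq2'
  set q3 := Real.Gamma (b + δ + s) with hq3'
  set q4 := Real.Gamma (b + δ + t) with hq4'
  have hp1 : 0 < p1 := Real.Gamma_pos_of_pos (by linarith)
  have hp2 : 0 < p2 := Real.Gamma_pos_of_pos (by linarith)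
  have hp3 : 0 < p3 := Real.Gamma_pos_of_pos (by linarith)
  have hp4 : 0 < p4 := Real.Gamma_pos_of_pos (by linarith)
  have hq1 : 0 < q1 := Real.Gamma_pos_of_pos (by linarith)
  have hq4 : 0 < q4 := Real.Gamma_pos_of_pos (by linarith)
  -- f1 : p4 * q2 < p2 * q4
  have f1 : p4 * q2 < p2 * q4 := by
    have := gamma_box_lt a b t (δ + t) ha hab ht (by linarith)
    rw [show a + (δ + t) = a + δ + t by ring, show b + (δ + t) = b + δ + t by ring] at this
    simpa [hp2', hp4', hq2', hq4'] using this
  -- f2 : p3 * q1 < p1 * q3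
  have f2 : p3 * q1 < p1 * q3 := by
    have := gamma_box_lt a b s (δ + s) ha hab hs (by linarith)
    rw [show a + (δ + s) = a + δ + s by ring, show b + (δ + s) = b + δ + s by ring] at this
    simpa [hp1', hp3', hq1', hq3'] using this
  -- f3 : p4 * q1 < p1 * q4
  have f3 : p4 * q1 < p1 * q4 := by
    have := gamma_box_lt a b s (δ + t) ha hab hs (by linarith)
    rw [show a + (δ + t) = a + δ + t by ring, show b + (δ + t) = b + δ + t by ring] at this
    simpa [hp1', hp4', hq1', hq4'] using this
  -- f4 : p2 * p3 ≤ p1 * p4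
  have f4 : p2 * p3 ≤ p1 * p4 := by
    have := gamma_box_le a (a + δ) s t ha (by linarith) hs hst
    simpa [hp1', hp2', hp3', hp4'] using this
  -- goal : p3*q2 - q3*p2 + (p4*q1 - q4*p1) < 0
  rcases le_or_gt (p3 * q2) (p2 * q3) with hX | hX
  · nlinarith [f3, hX]
  · have hv : 0 < p1 * q4 - p4 * q1 := by linarith
    have h5 : (p3 * q2 - p2 * q3) * (p1 * p4) < (p1 * q4 - p4 * q1) * (p2 * p3) := by
      nlinarith [mul_lt_mul_of_pos_right f1 (mul_pos hp1 hp3),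
        mul_lt_mul_of_pos_right f2 (mul_pos hp2 hp4)]
    have h6 : (p1 * q4 - p4 * q1) * (p2 * p3) ≤ (p1 * q4 - p4 * q1) * (p1 * p4) :=
      mul_le_mul_of_nonneg_left f4 hv.le
    have h7 : (p3 * q2 - p2 * q3) * (p1 * p4) < (p1 * q4 - p4 * q1) * (p1 * p4) :=
      lt_of_lt_of_le h5 h6
    have := (mul_lt_mul_iff_of_pos_right (mul_pos hp1 hp4)).mp h7
    linarith

/-- The key pair inequality, symmetric version. -/
lemma gamma_pair (a b δ s t : ℝ) (ha : 0 < a) (hab : a < b) (hδ : 0 < δ)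
    (hs : 0 ≤ s) (ht : 0 ≤ t) :
    (Real.Gamma (a + δ + s) * Real.Gamma (b + t) - Real.Gamma (b + δ + s) * Real.Gamma (a + t)) +
      (Real.Gamma (a + δ + t) * Real.Gamma (b + s) - Real.Gamma (b + δ + t) * Real.Gamma (a + s))
      < 0 := by
  rcases le_total s t with h | h
  · exact gamma_pair_aux a b δ s t ha hab hδ hs h
  · have := gamma_pair_aux a b δ t s ha hab hδ ht h
    linarith

theorem stmt_15 (g : ℕ → ℝ) (hg : ∀ n, 0 < g n)
    (a b δ : ℝ) (ha : 0 < a) (hab : a < b) (hδ : 0 < δ) :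
    (∀ m : ℕ,
      (∑ k ∈ Finset.range (m + 1),
        g k * g (m - k) *
          (Real.Gamma (a + δ + k) * Real.Gamma (b + (m - k : ℕ)) -
            Real.Gamma (b + δ + k) * Real.Gamma (a + (m - k : ℕ)))) < 0) ∧
    (∀ x : ℝ, 0 < x →
      (∀ c : ℝ, 0 < c → Summable (fun n : ℕ => g n * Real.Gamma (c + n) * x ^ n)) →
      (∑' n : ℕ, g n * Real.Gamma (a + δ + n) * x ^ n) *
          (∑' n : ℕ, g n * Real.Gamma (b + n) * x ^ n) <
        (∑' n : ℕ, g n * Real.Gamma (b + δ + n) * x ^ n) *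
          (∑' n : ℕ, g n * Real.Gamma (a + n) * x ^ n)) := by
  -- the finite-sum (coefficient) statement
  have part1 : ∀ m : ℕ,
      (∑ k ∈ Finset.range (m + 1),
        g k * g (m - k) *
          (Real.Gamma (a + δ + k) * Real.Gamma (b + (m - k : ℕ)) -
            Real.Gamma (b + δ + k) * Real.Gamma (a + (m - k : ℕ)))) < 0 := by
    intro m
    set T : ℕ → ℝ := fun k =>
      g k * g (m - k) *
        (Real.Gamma (a + δ + k) * Real.Gamma (b + (m - k : ℕ)) -
          Real.Gamma (b + δ + k) * Real.Gamma (a + (m - k : ℕ))) with hT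
    have hrefl : ∑ k ∈ Finset.range (m + 1), T (m - k) = ∑ k ∈ Finset.range (m + 1), T k := by
      have := Finset.sum_range_reflect T (m + 1)
      simpa using this
    have hpair : ∀ k ∈ Finset.range (m + 1), T k + T (m - k) < 0 := by
      intro k hk
      have hkm : k ≤ m := by
        simpa [Nat.lt_succ_iff] using Finset.mem_range.mp hk
      have hsub : m - (m - k) = k := Nat.sub_sub_self hkm
      have hkey := gamma_pair a b δ (k : ℝ) ((m - k : ℕ) : ℝ) ha hab hδ
        (Nat.cast_nonneg k) (Nat.cast_nonneg (m - k))
      have hTk : T k + T (m - k) =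
          g k * g (m - k) *
            ((Real.Gamma (a + δ + k) * Real.Gamma (b + (m - k : ℕ)) -
               Real.Gamma (b + δ + k) * Real.Gamma (a + (m - k : ℕ))) +
             (Real.Gamma (a + δ + (m - k : ℕ)) * Real.Gamma (b + k) -
               Real.Gamma (b + δ + (m - k : ℕ)) * Real.Gamma (a + k))) := by
        simp only [hT, hsub]
        ring
      rw [hTk]
      exact mul_neg_of_pos_of_neg (mul_pos (hg k) (hg (m - k))) hkey
    have hsum2 : (∑ k ∈ Finset.range (m + 1), T k) + (∑ k ∈ Finset.range (m + 1), T k) < 0 := by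
      nth_rewrite 2 [← hrefl]
      rw [← Finset.sum_add_distrib]
      have hne : (Finset.range (m + 1)).Nonempty := ⟨0, Finset.mem_range.mpr (Nat.succ_pos m)⟩
      calc (∑ k ∈ Finset.range (m + 1), (T k + T (m - k)))
          < ∑ k ∈ Finset.range (m + 1), (0:ℝ) := Finset.sum_lt_sum_of_nonempty hne hpair
        _ = 0 := Finset.sum_const_zero
    linarith
  refine ⟨part1, ?_⟩
  intro x hx hsum
  set fad : ℕ → ℝ := fun n => g n * Real.Gamma (a + δ + n) * x ^ n with hfad
  set fb : ℕ → ℝ := fun n => g n * Real.Gamma (b + n) * x ^ n with hfb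
  set fbd : ℕ → ℝ := fun n => g n * Real.Gamma (b + δ + n) * x ^ n with hfbd
  set fa : ℕ → ℝ := fun n => g n * Real.Gamma (a + n) * x ^ n with hfa
  have hpos : ∀ (c : ℝ), 0 < c → ∀ n : ℕ, 0 < g n * Real.Gamma (c + n) * x ^ n := by
    intro c hc n
    have : (0:ℝ) < c + n := by positivity
    have h2 := Real.Gamma_pos_of_pos this
    exact mul_pos (mul_pos (hg n) h2) (pow_pos hx n)
  have hnorm : ∀ (c : ℝ), 0 < c →
      Summable (fun n : ℕ => ‖g n * Real.Gamma (c + n) * x ^ n‖) := by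
    intro c hc
    have := hsum c hc
    refine this.congr fun n => ?_
    rw [Real.norm_of_nonneg (hpos c hc n).le]
  have had : (0:ℝ) < a + δ := by linarith
  have hbd : (0:ℝ) < b + δ := by linarith
  have hb : (0:ℝ) < b := by linarith
  have hnad := hnorm (a + δ) had
  have hnb := hnorm b hb
  have hnbd := hnorm (b + δ) hbd
  have hna := hnorm a ha
  have hL : (∑' n, fad n) * (∑' n, fb n) =
      ∑' n, ∑ k ∈ Finset.range (n + 1), fad k * fb (n - k) :=
    tsum_mul_tsum_eq_tsum_sum_range_of_summable_norm hnad hnb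
  have hR : (∑' n, fbd n) * (∑' n, fa n) =
      ∑' n, ∑ k ∈ Finset.range (n + 1), fbd k * fa (n - k) :=
    tsum_mul_tsum_eq_tsum_sum_range_of_summable_norm hnbd hna
  rw [hL, hR]
  -- termwise strict inequality
  have hAB : ∀ n : ℕ,
      (∑ k ∈ Finset.range (n + 1), fad k * fb (n - k)) <
        (∑ k ∈ Finset.range (n + 1), fbd k * fa (n - k)) := by
    intro n
    have hdiff : (∑ k ∈ Finset.range (n + 1), fad k * fb (n - k)) -
        (∑ k ∈ Finset.range (n + 1), fbd k * fa (n - k)) =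
        (∑ k ∈ Finset.range (n + 1),
          g k * g (n - k) *
            (Real.Gamma (a + δ + k) * Real.Gamma (b + (n - k : ℕ)) -
              Real.Gamma (b + δ + k) * Real.Gamma (a + (n - k : ℕ)))) * x ^ n := by
      rw [Finset.sum_mul, ← Finset.sum_sub_distrib]
      refine Finset.sum_congr rfl fun k hk => ?_
      have hkn : k ≤ n := by
        simpa [Nat.lt_succ_iff] using Finset.mem_range.mp hk
      have hpow : x ^ k * x ^ (n - k) = x ^ n := by
        rw [← pow_add]
        congr 1
        omega
      simp only [hfad, hfb, hfbd, hfa]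
      rw [← hpow]
      ring
    have := mul_neg_of_neg_of_pos (part1 n) (pow_pos hx n)
    linarith [hdiff ▸ this]
  have hsumA : Summable (fun n => ∑ k ∈ Finset.range (n + 1), fad k * fb (n - k)) :=
    (summable_norm_sum_mul_range_of_summable_norm hnad hnb).of_norm
  have hsumB : Summable (fun n => ∑ k ∈ Finset.range (n + 1), fbd k * fa (n - k)) :=
    (summable_norm_sum_mul_range_of_summable_norm hnbd hna).of_norm
  exact Summable.tsum_lt_tsum (fun n => (hAB n).le) (hAB 0) hsumA hsumB
end

section
/- Let f(a,x) = Σ_{n≥0} f_n (a)_n x^n/n! with f_n > 0 and f_n/f_{n−1} strictly decreasing. Then for a > 0 and x > 0: a/(a+1) < f(a+2,x) f(a,x) / f(a+1,x)^2 < 1 (direct and reverse Turán-type inequalities). -/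
noncomputable def sTerm (f : ℕ → ℝ) (x c : ℝ) (n : ℕ) : ℝ :=
  f n * poch c n * x ^ n / n.factorial



lemma poch_zero (a : ℝ) : poch a 0 = 1 := by simp [poch]

lemma poch_succ (a : ℝ) (n : ℕ) : poch a (n+1) = poch a n * (a + n) := by
  simp [poch, Finset.prod_range_succ]

lemma poch_one (a : ℝ) : poch a 1 = a := by
  rw [show (1:ℕ) = 0 + 1 from rfl, poch_succ, poch_zero]; simp

lemma poch_two (a : ℝ) : poch a 2 = a * (a+1) := by
  rw [show (2:ℕ) = 1 + 1 from rfl, poch_succ, poch_one]; push_cast; ring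

lemma poch_shift (a : ℝ) (n : ℕ) : a * poch (a+1) n = poch a n * (a + n) := by
  induction n with
  | zero => simp [poch]
  | succ n ih =>
    rw [poch_succ, poch_succ]
    push_cast
    linear_combination (a + 1 + (n:ℝ)) * ih

lemma poch_shift2 (a : ℝ) (n : ℕ) :
    (a*(a+1)) * poch (a+2) n = poch a n * ((a + n) * (a + n + 1)) := by
  have h1 := poch_shift (a+1) n
  have h2 := poch_shift a n
  have e : a + 1 + 1 = a + 2 := by ring
  rw [e] at h1
  linear_combination a * h1 + (a + 1 + (n:ℝ)) * h2

lemma poch_shift' (a : ℝ) (ha : a ≠ 0) (n : ℕ) :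
    poch (a+1) n = poch a n * (a + n) / a := by
  rw [eq_div_iff ha]
  linear_combination poch_shift a n

lemma poch_shift2' (a : ℝ) (ha : a ≠ 0) (ha1 : a + 1 ≠ 0) (n : ℕ) :
    poch (a+2) n = poch a n * ((a + n) * (a + n + 1)) / (a * (a+1)) := by
  rw [eq_div_iff (mul_ne_zero ha ha1)]
  linear_combination poch_shift2 a n

/-- ratio monotonicity: `f c * f (m-c)` is monotone toward the middle. -/
lemma fmul_mono (f : ℕ → ℝ) (hf : ∀ n, 0 < f n)
    (hratio : ∀ n : ℕ, f (n + 2) / f (n + 1) < f (n + 1) / f n) (m : ℕ) :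
    ∀ c d : ℕ, c ≤ d → 2*d ≤ m → f c * f (m-c) ≤ f d * f (m-d) := by
  have hanti : StrictAnti (fun n => f (n+1) / f n) := by
    apply strictAnti_nat_of_succ_lt
    intro n
    exact hratio n
  intro c d hcd
  induction d, hcd using Nat.le_induction with
  | base => intro _; exact le_refl _
  | succ d hd ih =>
    intro h2
    have h2' : 2*d ≤ m := by omega
    refine (ih h2').trans ?_
    have hdm : d < m - d - 1 := by omega
    have hr := hanti hdm
    simp only [] at hr
    have e1 : m - d - 1 + 1 = m - d := by omega
    rw [e1] at hr
    have hcross : f (m-d) * f d < f (d+1) * f (m-d-1) :=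
      (div_lt_div_iff₀ (hf (m-d-1)) (hf d)).mp hr
    have e2 : m - (d+1) = m - d - 1 := by omega
    rw [e2]
    nlinarith [hcross]

/-- The theta / rearrangement argument. -/
lemma theta_sum (m : ℕ) (t κ E : ℕ → ℝ)
    (ht : ∀ j ∈ Finset.range (m+1), 0 ≤ t j)
    (hκ : ∀ j ∈ Finset.range (m+1), 0 < κ j)
    (hzero : ∑ j ∈ Finset.range (m+1), κ j * E j = 0)
    (hcomp : ∀ j ∈ Finset.range (m+1), ∀ k ∈ Finset.range (m+1),
      E k ≤ 0 → 0 < E j → t k ≤ t j) :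
    0 ≤ ∑ j ∈ Finset.range (m+1), t j * (κ j * E j) := by
  classical
  set S := (Finset.range (m+1)).filter (fun j => E j ≤ 0) with hS
  rcases S.eq_empty_or_nonempty with hemp | hne
  · apply Finset.sum_nonneg
    intro j hj
    have hEj : 0 < E j := by
      by_contra h
      have hmem : j ∈ S := Finset.mem_filter.mpr ⟨hj, by linarith⟩
      rw [hemp] at hmem
      exact absurd hmem (Finset.notMem_empty j)
    exact mul_nonneg (ht j hj) (le_of_lt (mul_pos (hκ j hj) hEj))
  · obtain ⟨j₀, hj₀, hmax⟩ := S.exists_max_image t hne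
    have hj₀r : j₀ ∈ Finset.range (m+1) := (Finset.mem_filter.mp hj₀).1
    have hEj₀ : E j₀ ≤ 0 := (Finset.mem_filter.mp hj₀).2
    have key : ∑ j ∈ Finset.range (m+1), t j * (κ j * E j)
        = ∑ j ∈ Finset.range (m+1), (t j - t j₀) * (κ j * E j)
          + t j₀ * ∑ j ∈ Finset.range (m+1), κ j * E j := by
      rw [Finset.mul_sum, ← Finset.sum_add_distrib]
      apply Finset.sum_congr rfl
      intro j _
      ring
    rw [key, hzero, mul_zero, add_zero]
    apply Finset.sum_nonneg
    intro j hj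
    rcases le_or_gt (E j) 0 with hE | hE
    · have hjS : j ∈ S := Finset.mem_filter.mpr ⟨hj, hE⟩
      have h1 : t j - t j₀ ≤ 0 := by linarith [hmax j hjS]
      have h2 : κ j * E j ≤ 0 := by nlinarith [hκ j hj]
      nlinarith [h1, h2]
    · have h1 : 0 ≤ t j - t j₀ := by
        have := hcomp j hj j₀ hj₀r hEj₀ hE
        linarith
      exact mul_nonneg h1 (le_of_lt (mul_pos (hκ j hj) hE))

lemma poch_vandermonde (b c : ℝ) (m : ℕ) :
    ∑ j ∈ Finset.range (m+1), (m.choose j : ℝ) * (poch b j * poch c (m-j)) = poch (b+c) m := by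
  induction m with
  | zero => simp [poch]
  | succ m ih =>
    have key : ∀ j ∈ Finset.range (m+1),
        (m.choose j : ℝ) * (poch b (j+1) * poch c (m-j))
        + (m.choose j : ℝ) * (poch b j * poch c (m+1-j))
        = (b + c + m) * ((m.choose j : ℝ) * (poch b j * poch c (m-j))) := by
      intro j hj
      have hj' : j ≤ m := Nat.lt_succ_iff.mp (Finset.mem_range.mp hj)
      have h1 : m + 1 - j = (m - j) + 1 := by omega
      have h2 : ((m - j : ℕ) : ℝ) = (m : ℝ) - j := by
        rw [Nat.cast_sub hj']
      rw [h1, poch_succ, poch_succ, h2]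
      ring
    have split : ∀ i ∈ Finset.range (m+1),
        ((m+1).choose (i+1) : ℝ) * (poch b (i+1) * poch c (m+1-(i+1)))
        = (m.choose i : ℝ) * (poch b (i+1) * poch c (m-i))
          + (m.choose (i+1) : ℝ) * (poch b (i+1) * poch c (m-i)) := by
      intro i hi
      have h1 : m + 1 - (i+1) = m - i := by omega
      rw [h1, Nat.choose_succ_succ]
      push_cast
      ring
    have reidx : (∑ i ∈ Finset.range (m+1),
          (m.choose (i+1) : ℝ) * (poch b (i+1) * poch c (m-i)))
        + ((m.choose 0 : ℝ) * (poch b 0 * poch c (m+1-0)))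
        = ∑ j ∈ Finset.range (m+1), (m.choose j : ℝ) * (poch b j * poch c (m+1-j)) := by
      have h := Finset.sum_range_succ'
        (fun j => (m.choose j : ℝ) * (poch b j * poch c (m+1-j))) (m+1)
      beta_reduce at h
      have h2 : ∑ j ∈ Finset.range (m+1+1), (m.choose j : ℝ) * (poch b j * poch c (m+1-j))
          = ∑ j ∈ Finset.range (m+1), (m.choose j : ℝ) * (poch b j * poch c (m+1-j)) := by
        rw [Finset.sum_range_succ]
        simp [Nat.choose_succ_self]
      rw [h2] at h
      have h3 : ∀ i ∈ Finset.range (m+1),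
          (m.choose (i+1) : ℝ) * (poch b (i+1) * poch c (m+1-(i+1)))
          = (m.choose (i+1) : ℝ) * (poch b (i+1) * poch c (m-i)) := by
        intro i hi
        have e : m + 1 - (i+1) = m - i := by omega
        rw [e]
      rw [Finset.sum_congr rfl h3] at h
      exact h.symm
    calc ∑ j ∈ Finset.range (m+1+1), ((m+1).choose j : ℝ) * (poch b j * poch c (m+1-j))
        = (∑ i ∈ Finset.range (m+1),
            ((m+1).choose (i+1) : ℝ) * (poch b (i+1) * poch c (m+1-(i+1))))
          + ((m+1).choose 0 : ℝ) * (poch b 0 * poch c (m+1-0)) :=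
          Finset.sum_range_succ' _ (m+1)
      _ = (∑ i ∈ Finset.range (m+1), (m.choose i : ℝ) * (poch b (i+1) * poch c (m-i)))
          + ((∑ i ∈ Finset.range (m+1),
              (m.choose (i+1) : ℝ) * (poch b (i+1) * poch c (m-i)))
            + ((m.choose 0 : ℝ) * (poch b 0 * poch c (m+1-0)))) := by
          rw [Finset.sum_congr rfl split, Finset.sum_add_distrib]
          simp [Nat.choose_zero_right]
          ring
      _ = (∑ i ∈ Finset.range (m+1), (m.choose i : ℝ) * (poch b (i+1) * poch c (m-i)))
          + ∑ j ∈ Finset.range (m+1), (m.choose j : ℝ) * (poch b j * poch c (m+1-j)) := by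
          rw [reidx]
      _ = ∑ j ∈ Finset.range (m+1),
            (b + c + m) * ((m.choose j : ℝ) * (poch b j * poch c (m-j))) := by
          rw [← Finset.sum_add_distrib]
          exact Finset.sum_congr rfl key
      _ = poch (b+c) (m+1) := by
          rw [← Finset.mul_sum, ih, poch_succ]
          ring


lemma upper_coeff (f : ℕ → ℝ) (hf : ∀ n, 0 < f n)
    (hratio : ∀ n : ℕ, f (n + 2) / f (n + 1) < f (n + 1) / f n)
    (a x : ℝ) (ha : 0 < a) (hx : 0 < x) (m : ℕ) :
    ∑ j ∈ Finset.range (m+1), sTerm f x a j * sTerm f x (a+2) (m-j)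
    ≤ ∑ j ∈ Finset.range (m+1), sTerm f x (a+1) j * sTerm f x (a+1) (m-j) := by
  have ha0 : a ≠ 0 := ne_of_gt ha
  have ha1 : a + 1 ≠ 0 := by linarith
  set E : ℕ → ℝ := fun j => (4*a+2)*((a+j)*(a+(m:ℝ)-j)) - a*((2*a+m)*(2*a+m+1)) with hEdef
  set κ : ℕ → ℝ := fun j => (m.choose j : ℝ) * (poch a j * poch a (m-j)) with hκdef
  set t : ℕ → ℝ := fun j => f j * f (m-j) with htdef
  -- zero sum
  have hz : ∀ j ∈ Finset.range (m+1), κ j * E j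
      = a^2*(a+1) * (2*((m.choose j:ℝ)*(poch (a+1) j * poch (a+1) (m-j)))
        - (m.choose j:ℝ)*(poch a j * poch (a+2) (m-j))
        - (m.choose j:ℝ)*(poch (a+2) j * poch a (m-j))) := by
    intro j hj
    have hj' : j ≤ m := Nat.lt_succ_iff.mp (Finset.mem_range.mp hj)
    have hc : ((m-j:ℕ):ℝ) = (m:ℝ) - j := Nat.cast_sub hj'
    simp only [hEdef, hκdef]
    rw [poch_shift' a ha0 j, poch_shift' a ha0 (m-j), poch_shift2' a ha0 ha1 j,
      poch_shift2' a ha0 ha1 (m-j), hc]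
    field_simp
    ring
  have v1 : ∑ j ∈ Finset.range (m+1),
      (m.choose j:ℝ)*(poch (a+1) j * poch (a+1) (m-j)) = poch (a+(a+2)) m := by
    have h := poch_vandermonde (a+1) (a+1) m
    rw [show a+1+(a+1) = a+(a+2) by ring] at h
    exact h
  have v2 : ∑ j ∈ Finset.range (m+1),
      (m.choose j:ℝ)*(poch a j * poch (a+2) (m-j)) = poch (a+(a+2)) m :=
    poch_vandermonde a (a+2) m
  have v3 : ∑ j ∈ Finset.range (m+1),
      (m.choose j:ℝ)*(poch (a+2) j * poch a (m-j)) = poch (a+(a+2)) m := by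
    have h := poch_vandermonde (a+2) a m
    rw [show a+2+a = a+(a+2) by ring] at h
    exact h
  have hzero : ∑ j ∈ Finset.range (m+1), κ j * E j = 0 := by
    rw [Finset.sum_congr rfl hz]
    rw [show (fun j => a^2*(a+1) * (2*((m.choose j:ℝ)*(poch (a+1) j * poch (a+1) (m-j)))
        - (m.choose j:ℝ)*(poch a j * poch (a+2) (m-j))
        - (m.choose j:ℝ)*(poch (a+2) j * poch a (m-j))))
      = (fun j => a^2*(a+1) * (2*((m.choose j:ℝ)*(poch (a+1) j * poch (a+1) (m-j)))
        - (m.choose j:ℝ)*(poch a j * poch (a+2) (m-j))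
        - (m.choose j:ℝ)*(poch (a+2) j * poch a (m-j)))) from rfl]
    rw [← Finset.mul_sum]
    rw [Finset.sum_sub_distrib, Finset.sum_sub_distrib, ← Finset.mul_sum]
    rw [v1, v2, v3]
    ring
  -- comparison hypothesis
  have Esymm : ∀ j, j ≤ m → E (m-j) = E j := by
    intro j hj
    simp only [hEdef]
    rw [Nat.cast_sub hj]
    ring
  have core : ∀ j k : ℕ, 2*j ≤ m → 2*k ≤ m → E k ≤ 0 → 0 < E j →
      f k * f (m-k) ≤ f j * f (m-j) := by
    intro j k h2j h2k hEk hEj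
    have hkj : k < j := by
      by_contra hcon
      push_neg at hcon
      have hjc : (j:ℝ) ≤ k := Nat.cast_le.mpr hcon
      have hkc : 2*(k:ℝ) ≤ m := by exact_mod_cast h2k
      have hP : (a+(j:ℝ))*(a+(m:ℝ)-j) ≤ (a+(k:ℝ))*(a+(m:ℝ)-k) := by
        nlinarith [mul_nonneg (sub_nonneg.mpr hjc) (by linarith : (0:ℝ) ≤ (m:ℝ) - j - k)]
      simp only [hEdef] at hEk hEj
      nlinarith [hP, ha]
    exact fmul_mono f hf hratio m k j (le_of_lt hkj) h2j
  have hcomp : ∀ j ∈ Finset.range (m+1), ∀ k ∈ Finset.range (m+1),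
      E k ≤ 0 → 0 < E j → t k ≤ t j := by
    intro j hj k hk hEk hEj
    have hj' : j ≤ m := Nat.lt_succ_iff.mp (Finset.mem_range.mp hj)
    have hk' : k ≤ m := Nat.lt_succ_iff.mp (Finset.mem_range.mp hk)
    simp only [htdef]
    have tsymm : ∀ i, i ≤ m → f (m-i) * f (m-(m-i)) = f i * f (m-i) := by
      intro i hi
      rw [show m-(m-i) = i by omega]
      ring
    rcases le_or_gt (2*j) m with h2j | h2j <;> rcases le_or_gt (2*k) m with h2k | h2k
    · exact core j k h2j h2k hEk hEj
    · have h2k' : 2*(m-k) ≤ m := by omega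
      have hEk' : E (m-k) ≤ 0 := by rw [Esymm k hk']; exact hEk
      have := core j (m-k) h2j h2k' hEk' hEj
      rwa [tsymm k hk'] at this
    · have h2j' : 2*(m-j) ≤ m := by omega
      have hEj' : 0 < E (m-j) := by rw [Esymm j hj']; exact hEj
      have := core (m-j) k h2j' h2k hEk hEj'
      rwa [tsymm j hj'] at this
    · have h2k' : 2*(m-k) ≤ m := by omega
      have h2j' : 2*(m-j) ≤ m := by omega
      have hEk' : E (m-k) ≤ 0 := by rw [Esymm k hk']; exact hEk
      have hEj' : 0 < E (m-j) := by rw [Esymm j hj']; exact hEj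
      have := core (m-j) (m-k) h2j' h2k' hEk' hEj'
      rwa [tsymm k hk', tsymm j hj'] at this
  have ht : ∀ j ∈ Finset.range (m+1), 0 ≤ t j := by
    intro j _
    exact le_of_lt (mul_pos (hf j) (hf (m-j)))
  have hκ : ∀ j ∈ Finset.range (m+1), 0 < κ j := by
    intro j hj
    have hj' : j ≤ m := Nat.lt_succ_iff.mp (Finset.mem_range.mp hj)
    have : 0 < (m.choose j : ℝ) := by
      have := Nat.choose_pos hj'
      exact_mod_cast this
    exact mul_pos this (mul_pos (poch_pos ha j) (poch_pos ha (m-j)))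
  have main : 0 ≤ ∑ j ∈ Finset.range (m+1), t j * (κ j * E j) :=
    theta_sum m t κ E ht hκ hzero hcomp
  -- relate to the goal
  have hid : ∀ j ∈ Finset.range (m+1),
      a^2*(a+1)*(m.factorial:ℝ)
        * ((sTerm f x (a+1) j * sTerm f x (a+1) (m-j) - sTerm f x a j * sTerm f x (a+2) (m-j))
          + (sTerm f x (a+1) (m-j) * sTerm f x (a+1) (m-(m-j))
              - sTerm f x a (m-j) * sTerm f x (a+2) (m-(m-j))))
      = x^m * (t j * (κ j * E j)) := by
    intro j hj
    have hj' : j ≤ m := Nat.lt_succ_iff.mp (Finset.mem_range.mp hj)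
    have hc : ((m-j:ℕ):ℝ) = (m:ℝ) - j := Nat.cast_sub hj'
    have hmj : m - (m-j) = j := by omega
    have hxj : x^j * x^(m-j) = x^m := by rw [← pow_add, Nat.add_sub_cancel' hj']
    have hch : (m.choose j : ℝ) = (m.factorial : ℝ)/((j.factorial:ℝ)*((m-j).factorial:ℝ)) := by
      rw [eq_div_iff (by positivity)]
      rw [← mul_assoc]
      exact_mod_cast Nat.choose_mul_factorial_mul_factorial hj'
    simp only [sTerm, hmj, htdef, hκdef, hEdef]
    rw [poch_shift' a ha0 j, poch_shift' a ha0 (m-j), poch_shift2' a ha0 ha1 j,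
      poch_shift2' a ha0 ha1 (m-j), hc, hch, ← hxj]
    field_simp
    ring
  have reflect : ∑ j ∈ Finset.range (m+1),
      (sTerm f x (a+1) (m-j) * sTerm f x (a+1) (m-(m-j))
        - sTerm f x a (m-j) * sTerm f x (a+2) (m-(m-j)))
      = ∑ j ∈ Finset.range (m+1),
      (sTerm f x (a+1) j * sTerm f x (a+1) (m-j) - sTerm f x a j * sTerm f x (a+2) (m-j)) := by
    have h := Finset.sum_range_reflect (fun j => sTerm f x (a+1) j * sTerm f x (a+1) (m-j)
      - sTerm f x a j * sTerm f x (a+2) (m-j)) (m+1)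
    simp only [Nat.add_sub_cancel] at h
    exact h
  have hsum2 : 2 * (a^2*(a+1)*(m.factorial:ℝ))
      * ∑ j ∈ Finset.range (m+1),
        (sTerm f x (a+1) j * sTerm f x (a+1) (m-j) - sTerm f x a j * sTerm f x (a+2) (m-j))
      = x^m * ∑ j ∈ Finset.range (m+1), t j * (κ j * E j) := by
    calc 2 * (a^2*(a+1)*(m.factorial:ℝ)) * ∑ j ∈ Finset.range (m+1),
          (sTerm f x (a+1) j * sTerm f x (a+1) (m-j) - sTerm f x a j * sTerm f x (a+2) (m-j))
        = a^2*(a+1)*(m.factorial:ℝ) * ((∑ j ∈ Finset.range (m+1),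
            (sTerm f x (a+1) j * sTerm f x (a+1) (m-j) - sTerm f x a j * sTerm f x (a+2) (m-j)))
          + ∑ j ∈ Finset.range (m+1),
            (sTerm f x (a+1) (m-j) * sTerm f x (a+1) (m-(m-j))
              - sTerm f x a (m-j) * sTerm f x (a+2) (m-(m-j)))) := by
          rw [reflect]; ring
      _ = ∑ j ∈ Finset.range (m+1), a^2*(a+1)*(m.factorial:ℝ)
            * ((sTerm f x (a+1) j * sTerm f x (a+1) (m-j) - sTerm f x a j * sTerm f x (a+2) (m-j))
              + (sTerm f x (a+1) (m-j) * sTerm f x (a+1) (m-(m-j))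
                  - sTerm f x a (m-j) * sTerm f x (a+2) (m-(m-j)))) := by
          rw [← Finset.sum_add_distrib, Finset.mul_sum]
      _ = ∑ j ∈ Finset.range (m+1), x^m * (t j * (κ j * E j)) :=
          Finset.sum_congr rfl hid
      _ = x^m * ∑ j ∈ Finset.range (m+1), t j * (κ j * E j) := by
          rw [Finset.mul_sum]
  have hxm : 0 < x^m := pow_pos hx m
  have hfac : 0 < (m.factorial:ℝ) := by exact_mod_cast m.factorial_pos
  have hdiff : 0 ≤ ∑ j ∈ Finset.range (m+1),
      (sTerm f x (a+1) j * sTerm f x (a+1) (m-j) - sTerm f x a j * sTerm f x (a+2) (m-j)) := by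
    nlinarith [hsum2, mul_nonneg (le_of_lt hxm) main,
      mul_pos (mul_pos (mul_pos ha ha) (by linarith : (0:ℝ) < a+1)) hfac]
  have := Finset.sum_sub_distrib (s := Finset.range (m+1))
    (f := fun j => sTerm f x (a+1) j * sTerm f x (a+1) (m-j))
    (g := fun j => sTerm f x a j * sTerm f x (a+2) (m-j))
  linarith [hdiff, this]


lemma lower_coeff (f : ℕ → ℝ) (hf : ∀ n, 0 < f n)
    (a x : ℝ) (ha : 0 < a) (hx : 0 < x) (m : ℕ) :
    a * ∑ j ∈ Finset.range (m+1), sTerm f x (a+1) j * sTerm f x (a+1) (m-j)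
    ≤ (a+1) * ∑ j ∈ Finset.range (m+1), sTerm f x a j * sTerm f x (a+2) (m-j) := by
  have ha0 : a ≠ 0 := ne_of_gt ha
  have ha1 : a + 1 ≠ 0 := by linarith
  have hid : ∀ j ∈ Finset.range (m+1),
      a * (m.factorial:ℝ)
        * (((a+1) * (sTerm f x a j * sTerm f x (a+2) (m-j))
              - a * (sTerm f x (a+1) j * sTerm f x (a+1) (m-j)))
          + ((a+1) * (sTerm f x a (m-j) * sTerm f x (a+2) (m-(m-j)))
              - a * (sTerm f x (a+1) (m-j) * sTerm f x (a+1) (m-(m-j)))))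
      = x^m * ((f j * f (m-j)) * (((m.choose j : ℝ) * (poch a j * poch a (m-j)))
          * ((2*(j:ℝ)-m)^2 + (2*a+m)))) := by
    intro j hj
    have hj' : j ≤ m := Nat.lt_succ_iff.mp (Finset.mem_range.mp hj)
    have hc : ((m-j:ℕ):ℝ) = (m:ℝ) - j := Nat.cast_sub hj'
    have hmj : m - (m-j) = j := by omega
    have hxj : x^j * x^(m-j) = x^m := by rw [← pow_add, Nat.add_sub_cancel' hj']
    have hch : (m.choose j : ℝ) = (m.factorial : ℝ)/((j.factorial:ℝ)*((m-j).factorial:ℝ)) := by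
      rw [eq_div_iff (by positivity)]
      rw [← mul_assoc]
      exact_mod_cast Nat.choose_mul_factorial_mul_factorial hj'
    simp only [sTerm, hmj]
    rw [poch_shift' a ha0 j, poch_shift' a ha0 (m-j), poch_shift2' a ha0 ha1 j,
      poch_shift2' a ha0 ha1 (m-j), hc, hch, ← hxj]
    field_simp
    ring
  have reflect : ∑ j ∈ Finset.range (m+1),
      ((a+1) * (sTerm f x a (m-j) * sTerm f x (a+2) (m-(m-j)))
        - a * (sTerm f x (a+1) (m-j) * sTerm f x (a+1) (m-(m-j))))
      = ∑ j ∈ Finset.range (m+1),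
      ((a+1) * (sTerm f x a j * sTerm f x (a+2) (m-j))
        - a * (sTerm f x (a+1) j * sTerm f x (a+1) (m-j))) := by
    have h := Finset.sum_range_reflect (fun j => (a+1) * (sTerm f x a j * sTerm f x (a+2) (m-j))
      - a * (sTerm f x (a+1) j * sTerm f x (a+1) (m-j))) (m+1)
    simp only [Nat.add_sub_cancel] at h
    exact h
  have hnn : ∀ j ∈ Finset.range (m+1),
      0 ≤ x^m * ((f j * f (m-j)) * (((m.choose j : ℝ) * (poch a j * poch a (m-j)))
          * ((2*(j:ℝ)-m)^2 + (2*a+m)))) := by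
    intro j hj
    have hj' : j ≤ m := Nat.lt_succ_iff.mp (Finset.mem_range.mp hj)
    have hch : 0 < (m.choose j : ℝ) := by exact_mod_cast Nat.choose_pos hj'
    have h1 : 0 < (2*(j:ℝ)-m)^2 + (2*a+m) := by positivity
    exact le_of_lt (mul_pos (pow_pos hx m) (mul_pos (mul_pos (hf j) (hf (m-j)))
      (mul_pos (mul_pos hch (mul_pos (poch_pos ha j) (poch_pos ha (m-j)))) h1)))
  have hsum2 : 2 * (a*(m.factorial:ℝ)) * ∑ j ∈ Finset.range (m+1),
        ((a+1) * (sTerm f x a j * sTerm f x (a+2) (m-j))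
          - a * (sTerm f x (a+1) j * sTerm f x (a+1) (m-j)))
      = ∑ j ∈ Finset.range (m+1),
        x^m * ((f j * f (m-j)) * (((m.choose j : ℝ) * (poch a j * poch a (m-j)))
          * ((2*(j:ℝ)-m)^2 + (2*a+m)))) := by
    calc 2 * (a*(m.factorial:ℝ)) * ∑ j ∈ Finset.range (m+1),
          ((a+1) * (sTerm f x a j * sTerm f x (a+2) (m-j))
            - a * (sTerm f x (a+1) j * sTerm f x (a+1) (m-j)))
        = a*(m.factorial:ℝ) * ((∑ j ∈ Finset.range (m+1),
            ((a+1) * (sTerm f x a j * sTerm f x (a+2) (m-j))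
              - a * (sTerm f x (a+1) j * sTerm f x (a+1) (m-j))))
          + ∑ j ∈ Finset.range (m+1),
            ((a+1) * (sTerm f x a (m-j) * sTerm f x (a+2) (m-(m-j)))
              - a * (sTerm f x (a+1) (m-j) * sTerm f x (a+1) (m-(m-j))))) := by
          rw [reflect]; ring
      _ = ∑ j ∈ Finset.range (m+1), a*(m.factorial:ℝ)
            * (((a+1) * (sTerm f x a j * sTerm f x (a+2) (m-j))
                - a * (sTerm f x (a+1) j * sTerm f x (a+1) (m-j)))
              + ((a+1) * (sTerm f x a (m-j) * sTerm f x (a+2) (m-(m-j)))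
                - a * (sTerm f x (a+1) (m-j) * sTerm f x (a+1) (m-(m-j))))) := by
          rw [← Finset.sum_add_distrib, Finset.mul_sum]
      _ = ∑ j ∈ Finset.range (m+1),
            x^m * ((f j * f (m-j)) * (((m.choose j : ℝ) * (poch a j * poch a (m-j)))
              * ((2*(j:ℝ)-m)^2 + (2*a+m)))) := Finset.sum_congr rfl hid
  have hfac : 0 < (m.factorial:ℝ) := by exact_mod_cast m.factorial_pos
  have hdiff : 0 ≤ ∑ j ∈ Finset.range (m+1),
      ((a+1) * (sTerm f x a j * sTerm f x (a+2) (m-j))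
        - a * (sTerm f x (a+1) j * sTerm f x (a+1) (m-j))) := by
    nlinarith [hsum2, Finset.sum_nonneg hnn, mul_pos ha hfac]
  have hdist := Finset.sum_sub_distrib (s := Finset.range (m+1))
    (f := fun j => (a+1) * (sTerm f x a j * sTerm f x (a+2) (m-j)))
    (g := fun j => a * (sTerm f x (a+1) j * sTerm f x (a+1) (m-j)))
  rw [hdist] at hdiff
  rw [← Finset.mul_sum, ← Finset.mul_sum] at hdiff
  linarith


theorem stmt_18 (f : ℕ → ℝ) (hf : ∀ n, 0 < f n)
    (hratio : ∀ n : ℕ, f (n + 2) / f (n + 1) < f (n + 1) / f n)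
    (a x : ℝ) (ha : 0 < a) (hx : 0 < x)
    (hconv : ∀ c : ℝ, 0 < c → Summable (fun n : ℕ => f n * poch c n * x ^ n / n.factorial)) :
    a / (a + 1) <
      (∑' n : ℕ, f n * poch (a + 2) n * x ^ n / n.factorial) *
        (∑' n : ℕ, f n * poch a n * x ^ n / n.factorial) /
      (∑' n : ℕ, f n * poch (a + 1) n * x ^ n / n.factorial) ^ 2 ∧
    (∑' n : ℕ, f n * poch (a + 2) n * x ^ n / n.factorial) *
        (∑' n : ℕ, f n * poch a n * x ^ n / n.factorial) /
      (∑' n : ℕ, f n * poch (a + 1) n * x ^ n / n.factorial) ^ 2 < 1 := by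
  have ha1 : (0:ℝ) < a + 1 := by linarith
  have ha2 : (0:ℝ) < a + 2 := by linarith
  have hs : ∀ c : ℝ, 0 < c → Summable (sTerm f x c) := by
    intro c hc
    have h := hconv c hc
    exact h
  have hnn : ∀ c : ℝ, 0 < c → ∀ n, 0 ≤ sTerm f x c n := by
    intro c hc n
    have : (0:ℝ) < (n.factorial : ℝ) := by exact_mod_cast n.factorial_pos
    exact le_of_lt (div_pos (mul_pos (mul_pos (hf n) (poch_pos hc n)) (pow_pos hx n)) this)
  have hnorm : ∀ c : ℝ, 0 < c → Summable (fun n => ‖sTerm f x c n‖) := by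
    intro c hc
    have h := (hs c hc).abs
    simpa [Real.norm_eq_abs] using h
  -- Cauchy products
  have cup : (∑' n, sTerm f x a n) * (∑' n, sTerm f x (a+2) n)
      = ∑' m, ∑ j ∈ Finset.range (m+1), sTerm f x a j * sTerm f x (a+2) (m-j) :=
    tsum_mul_tsum_eq_tsum_sum_range_of_summable_norm (hnorm a ha) (hnorm (a+2) ha2)
  have c11 : (∑' n, sTerm f x (a+1) n) * (∑' n, sTerm f x (a+1) n)
      = ∑' m, ∑ j ∈ Finset.range (m+1), sTerm f x (a+1) j * sTerm f x (a+1) (m-j) :=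
    tsum_mul_tsum_eq_tsum_sum_range_of_summable_norm (hnorm (a+1) ha1) (hnorm (a+1) ha1)
  have hsum02 : Summable (fun m => ∑ j ∈ Finset.range (m+1),
      sTerm f x a j * sTerm f x (a+2) (m-j)) :=
    (summable_norm_sum_mul_range_of_summable_norm (hnorm a ha) (hnorm (a+2) ha2)).of_norm
  have hsum11 : Summable (fun m => ∑ j ∈ Finset.range (m+1),
      sTerm f x (a+1) j * sTerm f x (a+1) (m-j)) :=
    (summable_norm_sum_mul_range_of_summable_norm (hnorm (a+1) ha1) (hnorm (a+1) ha1)).of_norm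
  -- strict term computations
  have hU2 : (∑ j ∈ Finset.range 3, sTerm f x (a+1) j * sTerm f x (a+1) (2-j))
      - (∑ j ∈ Finset.range 3, sTerm f x a j * sTerm f x (a+2) (2-j))
      = x^2 * (f 1 * f 1 - f 0 * f 2) := by
    simp [sTerm, Finset.sum_range_succ, poch_zero, poch_one, poch_two, Nat.factorial]
    ring
  have hf12 : f 2 * f 0 < f 1 * f 1 := (div_lt_div_iff₀ (hf 1) (hf 0)).mp (hratio 0)
  have hL0 : (a+1) * (∑ j ∈ Finset.range 1, sTerm f x a j * sTerm f x (a+2) (0-j))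
      - a * (∑ j ∈ Finset.range 1, sTerm f x (a+1) j * sTerm f x (a+1) (0-j))
      = f 0 * f 0 := by
    simp [sTerm, Finset.sum_range_succ, poch_zero, Nat.factorial]
    ring
  -- strict inequalities between products
  have hUs : (∑' n, sTerm f x a n) * (∑' n, sTerm f x (a+2) n)
      < (∑' n, sTerm f x (a+1) n) * (∑' n, sTerm f x (a+1) n) := by
    have hsummU : Summable (fun m =>
        (∑ j ∈ Finset.range (m+1), sTerm f x (a+1) j * sTerm f x (a+1) (m-j))
        - (∑ j ∈ Finset.range (m+1), sTerm f x a j * sTerm f x (a+2) (m-j))) :=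
      hsum11.sub hsum02
    have hpos := Summable.tsum_pos hsummU
      (fun m => sub_nonneg.mpr (upper_coeff f hf hratio a x ha hx m)) 2
      (by
        show (0:ℝ) < _
        rw [show (2+1 : ℕ) = 3 from rfl]
        rw [hU2]
        nlinarith [pow_pos hx 2])
    rw [Summable.tsum_sub hsum11 hsum02] at hpos
    rw [← cup, ← c11] at hpos
    linarith
  have hLs : a * ((∑' n, sTerm f x (a+1) n) * (∑' n, sTerm f x (a+1) n))
      < (a+1) * ((∑' n, sTerm f x a n) * (∑' n, sTerm f x (a+2) n)) := by
    have hsummL : Summable (fun m =>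
        (a+1) * (∑ j ∈ Finset.range (m+1), sTerm f x a j * sTerm f x (a+2) (m-j))
        - a * (∑ j ∈ Finset.range (m+1), sTerm f x (a+1) j * sTerm f x (a+1) (m-j))) :=
      (hsum02.mul_left (a+1)).sub (hsum11.mul_left a)
    have hpos := Summable.tsum_pos hsummL
      (fun m => sub_nonneg.mpr (lower_coeff f hf a x ha hx m)) 0
      (by
        show (0:ℝ) < _
        rw [show (0+1 : ℕ) = 1 from rfl]
        rw [hL0]
        nlinarith [hf 0])
    rw [Summable.tsum_sub (hsum02.mul_left (a+1)) (hsum11.mul_left a), tsum_mul_left,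
      tsum_mul_left] at hpos
    rw [← cup, ← c11] at hpos
    linarith
  -- positivity of the sums
  have hTpos : ∀ c : ℝ, 0 < c → 0 < ∑' n, sTerm f x c n := by
    intro c hc
    refine Summable.tsum_pos (hs c hc) (hnn c hc) 0 ?_
    show (0:ℝ) < sTerm f x c 0
    simp [sTerm, poch_zero]
    exact hf 0
  have hT1 := hTpos (a+1) ha1
  have hTa := hTpos a ha
  have hT2 := hTpos (a+2) ha2
  have heq : ∀ c : ℝ, (∑' n : ℕ, f n * poch c n * x ^ n / n.factorial)
      = ∑' n, sTerm f x c n := fun c => rfl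
  rw [heq, heq, heq]
  constructor
  · rw [div_lt_div_iff₀ ha1 (pow_pos hT1 2), pow_two]
    nlinarith [hLs]
  · rw [div_lt_one (pow_pos hT1 2), pow_two]
    nlinarith [hUs]
end
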